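/- arXiv:1809.10462 — 6 statements merged into one kernel-verified Lean document; each statement's English description precedes it below -/
import Mathlib

section
/- There exists a constant c(L) depending only on L such that the following holds. Let X be a centered random vector in ℝ^d satisfying the L₄–L₂ norm equivalence with constant L, with covariance Σ = 𝔼(X⊗X). For α > 0, let X̃ = X·1_{‖X‖₂ ≤ α} and Σ̃ = 𝔼(X̃⊗X̃). Then ‖Σ̃ − Σ‖ ≤ c(L) ‖Σ‖ Tr(Σ) / α². -/
open MeasureTheory ProbabilityTheory
open scoped RealInnerProductSpace

/-- The ℓ₂→ℓ₂ operator norm of a `d × d` real matrix. -/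
noncomputable def matOpNorm {d : ℕ} (A : Matrix (Fin d) (Fin d) ℝ) : ℝ :=
  ‖Matrix.toEuclideanCLM (𝕜 := ℝ) (n := Fin d) A‖

/-- The outer product `z zᵀ` of a vector with itself. -/
noncomputable def outerMat {d : ℕ} (z : EuclideanSpace ℝ (Fin d)) :
    Matrix (Fin d) (Fin d) ℝ := Matrix.of fun i j => z i * z j

/-- Covariance-type matrix `𝔼 (X ⊗ X)` of a random vector. -/
noncomputable def covMat {Ω : Type*} [MeasurableSpace Ω] (P : Measure Ω) {d : ℕ}
    (X : Ω → EuclideanSpace ℝ (Fin d)) : Matrix (Fin d) (Fin d) ℝ :=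
  Matrix.of fun i j => ∫ ω, X ω i * X ω j ∂P

/-- Effective rank `Tr(A)/‖A‖`. -/
noncomputable def effRank {d : ℕ} (A : Matrix (Fin d) (Fin d) ℝ) : ℝ :=
  A.trace / matOpNorm A

/-- The squared weak variance `R_Z² = sup_{u,v ∈ S^{d-1}} 𝔼 (vᵀ (Z⊗Z - 𝔼 Z⊗Z) u)²`. -/
noncomputable def weakVarSq {Ω : Type*} [MeasurableSpace Ω] (P : Measure Ω) {d : ℕ}
    (Z : Ω → EuclideanSpace ℝ (Fin d)) : ℝ :=
  ⨆ p : Metric.sphere (0 : EuclideanSpace ℝ (Fin d)) 1 ×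
        Metric.sphere (0 : EuclideanSpace ℝ (Fin d)) 1,
    ∫ ω, (∑ i, ∑ j,
      (p.2 : EuclideanSpace ℝ (Fin d)) i * (Z ω i * Z ω j - covMat P Z i j) *
      (p.1 : EuclideanSpace ℝ (Fin d)) j) ^ 2 ∂P

/-- The weak variance `R_Z`. -/
noncomputable def weakVar {Ω : Type*} [MeasurableSpace Ω] (P : Measure Ω) {d : ℕ}
    (Z : Ω → EuclideanSpace ℝ (Fin d)) : ℝ :=
  Real.sqrt (weakVarSq P Z)

/-- Truncation `X 1_{‖X‖₂ ≤ α}`. -/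
noncomputable def trunc {Ω : Type*} {d : ℕ} (X : Ω → EuclideanSpace ℝ (Fin d)) (α : ℝ) :
    Ω → EuclideanSpace ℝ (Fin d) := fun ω => if ‖X ω‖ ≤ α then X ω else 0

/-- `X` is a centered random vector. -/
def IsCentered {Ω : Type*} [MeasurableSpace Ω] (P : Measure Ω) {d : ℕ}
    (X : Ω → EuclideanSpace ℝ (Fin d)) : Prop :=
  ∀ i : Fin d, ∫ ω, X ω i ∂P = 0

/-- `X` is `L`-subgaussian: all moments exist and
`(𝔼|⟨X,t⟩|^p)^{1/p} ≤ L √p (𝔼⟨X,t⟩²)^{1/2}` for all `t` and `p ≥ 2`. -/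
def IsLSubgaussian {Ω : Type*} [MeasurableSpace Ω] (P : Measure Ω) {d : ℕ}
    (X : Ω → EuclideanSpace ℝ (Fin d)) (L : ℝ) : Prop :=
  ∀ t : EuclideanSpace ℝ (Fin d), ∀ p : ℝ, 2 ≤ p →
    Integrable (fun ω => |⟪X ω, t⟫| ^ p) P ∧
    (∫ ω, |⟪X ω, t⟫| ^ p ∂P) ^ (1 / p) ≤
      L * Real.sqrt p * (∫ ω, ⟪X ω, t⟫ ^ 2 ∂P) ^ ((1 : ℝ) / 2)

/-- A centered `X` satisfies `L₄-L₂` norm equivalence with constant `L`: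
fourth moments exist and `(𝔼⟨X,t⟩⁴)^{1/4} ≤ L (𝔼⟨X,t⟩²)^{1/2}` for all `t`. -/
def SatisfiesL4L2 {Ω : Type*} [MeasurableSpace Ω] (P : Measure Ω) {d : ℕ}
    (X : Ω → EuclideanSpace ℝ (Fin d)) (L : ℝ) : Prop :=
  ∀ t : EuclideanSpace ℝ (Fin d),
    Integrable (fun ω => ⟪X ω, t⟫ ^ 4) P ∧
    (∫ ω, ⟪X ω, t⟫ ^ 4 ∂P) ^ ((1 : ℝ) / 4) ≤
      L * (∫ ω, ⟪X ω, t⟫ ^ 2 ∂P) ^ ((1 : ℝ) / 2)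

/-- `Xi` is a sequence of independent copies of `X`. -/
def IIDCopies {Ω : Type*} [MeasurableSpace Ω] (P : Measure Ω) {d N : ℕ}
    (X : Ω → EuclideanSpace ℝ (Fin d)) (Xi : Fin N → Ω → EuclideanSpace ℝ (Fin d)) : Prop :=
  (∀ i, Measurable (Xi i)) ∧ iIndepFun Xi P ∧
    ∀ i, Measure.map (Xi i) P = Measure.map X P

section helpers

lemma my_integral_cs {Ω : Type*} [MeasurableSpace Ω] {P : Measure Ω} {f g : Ω → ℝ}
    (hf0 : ∀ ω, 0 ≤ f ω) (hg0 : ∀ ω, 0 ≤ g ω)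
    (hf : Integrable (fun ω => f ω ^ 2) P) (hg : Integrable (fun ω => g ω ^ 2) P)
    (hfg : Integrable (fun ω => f ω * g ω) P) :
    ∫ ω, f ω * g ω ∂P ≤ Real.sqrt (∫ ω, f ω ^ 2 ∂P) * Real.sqrt (∫ ω, g ω ^ 2 ∂P) := by
  set A := ∫ ω, f ω ^ 2 ∂P with hA
  set B := ∫ ω, g ω ^ 2 ∂P with hB
  have hA0 : 0 ≤ A := integral_nonneg fun ω => sq_nonneg _
  have hB0 : 0 ≤ B := integral_nonneg fun ω => sq_nonneg _
  rcases eq_or_lt_of_le hA0 with hA' | hA'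
  · have hf0' : (fun ω => f ω ^ 2) =ᵐ[P] 0 :=
      (integral_eq_zero_iff_of_nonneg (fun ω => sq_nonneg _) hf).mp hA'.symm
    have : (fun ω => f ω * g ω) =ᵐ[P] 0 := by
      filter_upwards [hf0'] with ω hω
      have : f ω = 0 := by
        have := hω; simp only [Pi.zero_apply] at this; nlinarith [hf0 ω]
      simp [this]
    rw [integral_congr_ae this]
    simp
    positivity
  rcases eq_or_lt_of_le hB0 with hB' | hB'
  · have hg0' : (fun ω => g ω ^ 2) =ᵐ[P] 0 :=
      (integral_eq_zero_iff_of_nonneg (fun ω => sq_nonneg _) hg).mp hB'.symm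
    have : (fun ω => f ω * g ω) =ᵐ[P] 0 := by
      filter_upwards [hg0'] with ω hω
      have : g ω = 0 := by
        have := hω; simp only [Pi.zero_apply] at this; nlinarith [hg0 ω]
      simp [this]
    rw [integral_congr_ae this]
    simp
    positivity
  set l := Real.sqrt B / Real.sqrt A with hl
  have hlpos : 0 < l := div_pos (Real.sqrt_pos.mpr hB') (Real.sqrt_pos.mpr hA')
  have hptwise : ∀ ω, f ω * g ω ≤ (l * f ω ^ 2 + g ω ^ 2 / l) / 2 := by
    intro ω
    have h := sq_nonneg (l * f ω - g ω)
    have key : 2 * l * (f ω * g ω) ≤ l ^ 2 * f ω ^ 2 + g ω ^ 2 := by nlinarith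
    have hm : g ω ^ 2 / l * l = g ω ^ 2 := div_mul_cancel₀ _ (ne_of_gt hlpos)
    nlinarith [key, hm, hlpos]
  have hint : Integrable (fun ω => (l * f ω ^ 2 + g ω ^ 2 / l) / 2) P :=
    (((hf.const_mul l).add (hg.div_const l)).div_const 2)
  calc ∫ ω, f ω * g ω ∂P ≤ ∫ ω, (l * f ω ^ 2 + g ω ^ 2 / l) / 2 ∂P :=
        integral_mono hfg hint hptwise
    _ = (l * A + B / l) / 2 := by
        rw [integral_div, integral_add (hf.const_mul l) (hg.div_const l),
          integral_const_mul, integral_div]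
    _ = Real.sqrt A * Real.sqrt B := by
        rw [hl]
        have h1 : Real.sqrt A ≠ 0 := ne_of_gt (Real.sqrt_pos.mpr hA')
        have h2 : Real.sqrt B ≠ 0 := ne_of_gt (Real.sqrt_pos.mpr hB')
        have hAs : Real.sqrt A * Real.sqrt A = A := Real.mul_self_sqrt hA0
        have hBs : Real.sqrt B * Real.sqrt B = B := Real.mul_self_sqrt hB0
        field_simp
        nlinarith [hAs, hBs]

lemma toEuclideanCLM_apply_coord {d : ℕ} (A : Matrix (Fin d) (Fin d) ℝ)
    (v : EuclideanSpace ℝ (Fin d)) (i : Fin d) :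
    (Matrix.toEuclideanCLM (𝕜 := ℝ) A) v i = ∑ j, A i j * v j := by
  have h := congrFun (Matrix.ofLp_toEuclideanCLM (𝕜 := ℝ) A v) i
  rw [h]
  simp [Matrix.mulVec, dotProduct]

lemma matOpNorm_le_of_bilin {d : ℕ} (A : Matrix (Fin d) (Fin d) ℝ) (B : ℝ) (hB : 0 ≤ B)
    (h : ∀ u v : EuclideanSpace ℝ (Fin d),
      ⟪(Matrix.toEuclideanCLM (𝕜 := ℝ) A) v, u⟫ ≤ B / 2 * (‖u‖ ^ 2 + ‖v‖ ^ 2)) :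
    matOpNorm A ≤ B := by
  set T := Matrix.toEuclideanCLM (𝕜 := ℝ) A with hT
  have key : ∀ u v : EuclideanSpace ℝ (Fin d), ⟪T v, u⟫ ≤ B * ‖u‖ * ‖v‖ := by
    intro u v
    rcases eq_or_ne u 0 with rfl | hu
    · simp
    rcases eq_or_ne v 0 with rfl | hv
    · simp
    have hu' : 0 < ‖u‖ := norm_pos_iff.mpr hu
    have hv' : 0 < ‖v‖ := norm_pos_iff.mpr hv
    set c := Real.sqrt (‖v‖ / ‖u‖) with hc
    set c' := Real.sqrt (‖u‖ / ‖v‖) with hc'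
    have hcpos : 0 < c := Real.sqrt_pos.mpr (div_pos hv' hu')
    have hc'pos : 0 < c' := Real.sqrt_pos.mpr (div_pos hu' hv')
    have hcc' : c * c' = 1 := by
      rw [hc, hc', ← Real.sqrt_mul (by positivity)]
      rw [show ‖v‖ / ‖u‖ * (‖u‖ / ‖v‖) = 1 by field_simp]
      exact Real.sqrt_one
    have hc2 : c ^ 2 = ‖v‖ / ‖u‖ := Real.sq_sqrt (by positivity)
    have hc'2 : c' ^ 2 = ‖u‖ / ‖v‖ := Real.sq_sqrt (by positivity)
    have happ := h (c • u) (c' • v)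
    rw [_root_.map_smul, real_inner_smul_left, real_inner_smul_right] at happ
    rw [norm_smul, norm_smul] at happ
    simp only [Real.norm_eq_abs, abs_of_pos hcpos, abs_of_pos hc'pos] at happ
    rw [mul_pow, mul_pow, hc2, hc'2] at happ
    have heq1 : ‖v‖ / ‖u‖ * ‖u‖ ^ 2 = ‖v‖ * ‖u‖ := by field_simp
    have heq2 : ‖u‖ / ‖v‖ * ‖v‖ ^ 2 = ‖u‖ * ‖v‖ := by field_simp
    rw [heq1, heq2] at happ
    have : c' * (c * ⟪T v, u⟫) = ⟪T v, u⟫ := by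
      rw [← mul_assoc, mul_comm c' c, hcc', one_mul]
    rw [this] at happ
    calc ⟪T v, u⟫ ≤ B / 2 * (‖v‖ * ‖u‖ + ‖u‖ * ‖v‖) := happ
      _ = B * ‖u‖ * ‖v‖ := by ring
  have hnorm : ∀ v : EuclideanSpace ℝ (Fin d), ‖T v‖ ≤ B * ‖v‖ := by
    intro v
    rcases eq_or_lt_of_le (norm_nonneg (T v)) with h0 | h0
    · rw [← h0]; positivity
    · have hk := key (T v) v
      rw [real_inner_self_eq_norm_sq] at hk
      nlinarith
  exact ContinuousLinearMap.opNorm_le_bound T hB hnorm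

lemma covMat_bilin {Ω : Type*} [MeasurableSpace Ω] (P : Measure Ω) {d : ℕ}
    (Z : Ω → EuclideanSpace ℝ (Fin d))
    (hint : ∀ i j : Fin d, Integrable (fun ω => Z ω i * Z ω j) P)
    (u v : EuclideanSpace ℝ (Fin d)) :
    ⟪(Matrix.toEuclideanCLM (𝕜 := ℝ) (covMat P Z)) v, u⟫
      = ∫ ω, ⟪Z ω, u⟫ * ⟪Z ω, v⟫ ∂P := by
  have hLHS : ⟪(Matrix.toEuclideanCLM (𝕜 := ℝ) (covMat P Z)) v, u⟫
      = ∑ i, ∑ j, (∫ ω, Z ω i * Z ω j ∂P) * v j * u i := by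
    rw [PiLp.inner_apply]
    simp only [RCLike.inner_apply, starRingEnd_apply, star_trivial,
      toEuclideanCLM_apply_coord]
    refine Finset.sum_congr rfl fun i _ => ?_
    rw [Finset.mul_sum]
    refine Finset.sum_congr rfl fun j _ => ?_
    simp only [covMat, Matrix.of_apply]
    ring
  rw [hLHS]
  have hRHS : ∀ ω, ⟪Z ω, u⟫ * ⟪Z ω, v⟫ = ∑ i, ∑ j, Z ω i * Z ω j * v j * u i := by
    intro ω
    rw [PiLp.inner_apply, PiLp.inner_apply, Finset.sum_mul_sum]
    exact Finset.sum_congr rfl fun i _ => Finset.sum_congr rfl fun j _ => by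
      simp only [RCLike.inner_apply, starRingEnd_apply, star_trivial]; ring
  rw [integral_congr_ae (Filter.Eventually.of_forall hRHS)]
  rw [integral_finset_sum _ (fun i _ => integrable_finset_sum _ (fun j _ =>
    ((hint i j).mul_const (v j)).mul_const (u i)))]
  exact Finset.sum_congr rfl fun i _ => by
    rw [integral_finset_sum _ (fun j _ => ((hint i j).mul_const (v j)).mul_const (u i))]
    exact Finset.sum_congr rfl fun j _ => by rw [integral_mul_const, integral_mul_const]

end helpers

set_option maxHeartbeats 2000000 in
/-- For every `L ≥ 1` there is `c(L) > 0` such that for any centered `X` satisfying the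
`L₄-L₂` norm equivalence with constant `L` and any truncation level `α > 0`, the covariance
of the truncation `X̃ = X 1_{‖X‖₂ ≤ α}` satisfies `‖Σ̃ - Σ‖ ≤ c(L) ‖Σ‖ Tr(Σ) / α²`. -/
theorem truncated_cov_opNorm_bound :
    ∀ L : ℝ, 1 ≤ L → ∃ c : ℝ, 0 < c ∧
      ∀ (Ω : Type*) [MeasurableSpace Ω] (P : Measure Ω) [IsProbabilityMeasure P]
        (d : ℕ) (X : Ω → EuclideanSpace ℝ (Fin d)),
        Measurable X → IsCentered P X → SatisfiesL4L2 P X L →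
        ∀ α : ℝ, 0 < α →
          matOpNorm (covMat P (trunc X α) - covMat P X) ≤
            c * matOpNorm (covMat P X) * (covMat P X).trace / α ^ 2 := by
  intro L hL
  have hL0 : 0 < L := lt_of_lt_of_le one_pos hL
  refine ⟨L ^ 4, by positivity, ?_⟩
  intro Ω _ P _ d X hX hcent hL4 α hα
  set Y := trunc X α with hYdef
  have hYmeas : Measurable Y := by
    unfold Y
    unfold trunc
    exact Measurable.ite (measurableSet_le hX.norm measurable_const) hX measurable_const
  have hXi : ∀ i : Fin d, Measurable fun ω => X ω i := fun i => (measurable_pi_apply i).comp ((WithLp.measurable_ofLp _ _).comp hX)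
  have hinnX : ∀ t, Measurable fun ω => ⟪X ω, t⟫ := fun t => hX.inner measurable_const
  have hinnY : ∀ t, Measurable fun ω => ⟪Y ω, t⟫ := fun t => hYmeas.inner measurable_const
  have hsingle : ∀ (ω : Ω) (i : Fin d), ⟪X ω, EuclideanSpace.single i (1:ℝ)⟫ = X ω i :=
    fun ω i => by simp [EuclideanSpace.inner_single_right]
  have hYcase : ∀ ω, (‖X ω‖ ≤ α ∧ Y ω = X ω) ∨ (α < ‖X ω‖ ∧ Y ω = 0) := by
    intro ω
    by_cases hω : ‖X ω‖ ≤ α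
    · exact Or.inl ⟨hω, by unfold Y; unfold trunc; simp [hω]⟩
    · exact Or.inr ⟨lt_of_not_ge hω, by unfold Y; unfold trunc; simp [hω]⟩
  -- basic integrability
  have h4 : ∀ t, Integrable (fun ω => ⟪X ω, t⟫ ^ 4) P := fun t => (hL4 t).1
  have h2 : ∀ t, Integrable (fun ω => ⟪X ω, t⟫ ^ 2) P := by
    intro t
    refine ((integrable_const (1:ℝ)).add (h4 t)).mono'
      (((hinnX t).pow_const 2).aestronglyMeasurable) ?_
    filter_upwards with ω
    rw [Real.norm_eq_abs, abs_of_nonneg (sq_nonneg _)]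
    simp only [Pi.add_apply]
    nlinarith [sq_nonneg (⟪X ω, t⟫ ^ 2 - 1)]
  have hmul4 : ∀ u v, Integrable (fun ω => ⟪X ω, u⟫ ^ 2 * ⟪X ω, v⟫ ^ 2) P := by
    intro u v
    refine ((h4 u).add (h4 v)).mono'
      (((hinnX u).pow_const 2).mul ((hinnX v).pow_const 2)).aestronglyMeasurable ?_
    filter_upwards with ω
    rw [Real.norm_eq_abs, abs_of_nonneg (by positivity)]
    simp only [Pi.add_apply]
    nlinarith [sq_nonneg (⟪X ω, u⟫ ^ 2 - ⟪X ω, v⟫ ^ 2)]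
  have hmul1 : ∀ u v, Integrable (fun ω => ⟪X ω, u⟫ * ⟪X ω, v⟫) P := by
    intro u v
    refine ((h2 u).add (h2 v)).mono' ((hinnX u).mul (hinnX v)).aestronglyMeasurable ?_
    filter_upwards with ω
    rw [Real.norm_eq_abs, abs_mul]
    simp only [Pi.add_apply]
    nlinarith [sq_nonneg (|⟪X ω, u⟫| - |⟪X ω, v⟫|), sq_abs ⟪X ω, u⟫, sq_abs ⟪X ω, v⟫,
      abs_nonneg ⟪X ω, u⟫, abs_nonneg ⟪X ω, v⟫]
  have hprodX : ∀ i j : Fin d, Integrable (fun ω => X ω i * X ω j) P := by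
    intro i j
    have := hmul1 (EuclideanSpace.single i 1) (EuclideanSpace.single j 1)
    simpa only [hsingle] using this
  have hprodY : ∀ i j : Fin d, Integrable (fun ω => Y ω i * Y ω j) P := by
    intro i j
    refine (hprodX i j).abs.mono'
      ((((measurable_pi_apply i).comp ((WithLp.measurable_ofLp _ _).comp hYmeas)).mul
        ((measurable_pi_apply j).comp ((WithLp.measurable_ofLp _ _).comp hYmeas))).aestronglyMeasurable) ?_
    filter_upwards with ω
    rw [Real.norm_eq_abs]
    rcases hYcase ω with ⟨_, hYω⟩ | ⟨_, hYω⟩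
    · rw [hYω]
    · rw [hYω]; simp [abs_nonneg]; positivity
  -- trace facts
  have htrace : (covMat P X).trace = ∑ i, ∫ ω, X ω i * X ω i ∂P := by
    simp [Matrix.trace, Matrix.diag, covMat]
  have htr0 : 0 ≤ (covMat P X).trace := by
    rw [htrace]
    exact Finset.sum_nonneg fun i _ => integral_nonneg fun ω => mul_self_nonneg _
  have hop0 : 0 ≤ matOpNorm (covMat P X) := norm_nonneg _
  have hnormsq : ∀ ω, ‖X ω‖ ^ 2 = ∑ i, (X ω i) ^ 2 := by
    intro ω
    rw [EuclideanSpace.norm_eq, Real.sq_sqrt (by positivity)]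
    simp [sq_abs]
  -- sqrt of 4th moment bound
  have hsqrt4 : ∀ t, Real.sqrt (∫ ω, ⟪X ω, t⟫ ^ 4 ∂P) ≤ L ^ 2 * ∫ ω, ⟪X ω, t⟫ ^ 2 ∂P := by
    intro t
    set A4 := ∫ ω, ⟪X ω, t⟫ ^ 4 ∂P with hA4def
    set A2 := ∫ ω, ⟪X ω, t⟫ ^ 2 ∂P with hA2def
    have hA4 : 0 ≤ A4 := integral_nonneg fun ω => by positivity
    have hA2 : 0 ≤ A2 := integral_nonneg fun ω => sq_nonneg _
    have h := (hL4 t).2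
    have hsq := pow_le_pow_left₀ (Real.rpow_nonneg hA4 _) h 2
    have e1 : (A4 ^ ((1:ℝ)/4)) ^ 2 = A4 ^ ((1:ℝ)/2) := by
      rw [← Real.rpow_natCast (A4 ^ ((1:ℝ)/4)) 2, ← Real.rpow_mul hA4]
      norm_num
    have e2 : (L * A2 ^ ((1:ℝ)/2)) ^ 2 = L ^ 2 * A2 := by
      rw [mul_pow, ← Real.rpow_natCast (A2 ^ ((1:ℝ)/2)) 2, ← Real.rpow_mul hA2]
      norm_num
    rw [e1, e2] at hsq
    rw [Real.sqrt_eq_rpow]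
    exact hsq
  -- integrability of ⟪X,t⟫² ‖X‖²
  have hintnorm : ∀ t, Integrable (fun ω => ⟪X ω, t⟫ ^ 2 * ‖X ω‖ ^ 2) P := by
    intro t
    have heq : (fun ω => ⟪X ω, t⟫ ^ 2 * ‖X ω‖ ^ 2)
        = fun ω => ∑ i, ⟪X ω, t⟫ ^ 2 * (X ω i) ^ 2 := by
      funext ω; rw [hnormsq, Finset.mul_sum]
    rw [heq]
    refine integrable_finset_sum _ fun i _ => ?_
    have := hmul4 t (EuclideanSpace.single i 1)
    simpa only [hsingle] using this
  -- key second moment bound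
  have key2 : ∀ t : EuclideanSpace ℝ (Fin d),
      ∫ ω, ⟪X ω, t⟫ ^ 2 * ‖X ω‖ ^ 2 ∂P
        ≤ L ^ 4 * (∫ ω, ⟪X ω, t⟫ ^ 2 ∂P) * (covMat P X).trace := by
    intro t
    have hre : ∫ ω, ⟪X ω, t⟫ ^ 2 * ‖X ω‖ ^ 2 ∂P
        = ∑ i, ∫ ω, ⟪X ω, t⟫ ^ 2 * (X ω i) ^ 2 ∂P := by
      rw [show (fun ω => ⟪X ω, t⟫ ^ 2 * ‖X ω‖ ^ 2)
          = fun ω => ∑ i, ⟪X ω, t⟫ ^ 2 * (X ω i) ^ 2 from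
            funext fun ω => by rw [hnormsq, Finset.mul_sum]]
      exact integral_finset_sum _ fun i _ => by
        simpa only [hsingle] using hmul4 t (EuclideanSpace.single i 1)
    rw [hre]
    have hA2 : 0 ≤ ∫ ω, ⟪X ω, t⟫ ^ 2 ∂P := integral_nonneg fun ω => sq_nonneg _
    have step : ∀ i : Fin d, ∫ ω, ⟪X ω, t⟫ ^ 2 * (X ω i) ^ 2 ∂P
        ≤ (L ^ 2 * ∫ ω, ⟪X ω, t⟫ ^ 2 ∂P) * (L ^ 2 * ∫ ω, X ω i * X ω i ∂P) := by
      intro i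
      have f2 : Integrable (fun ω => (⟪X ω, t⟫ ^ 2) ^ 2) P :=
        (h4 t).congr (Filter.Eventually.of_forall fun ω => by ring)
      have g2 : Integrable (fun ω => ((X ω i) ^ 2) ^ 2) P :=
        (h4 (EuclideanSpace.single i 1)).congr
          (Filter.Eventually.of_forall fun ω => by simp only [hsingle]; ring)
      have fg : Integrable (fun ω => ⟪X ω, t⟫ ^ 2 * (X ω i) ^ 2) P := by
        simpa only [hsingle] using hmul4 t (EuclideanSpace.single i 1)
      have hcs := my_integral_cs (P := P) (f := fun ω => ⟪X ω, t⟫ ^ 2)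
        (g := fun ω => (X ω i) ^ 2) (fun ω => sq_nonneg _) (fun ω => sq_nonneg _) f2 g2 fg
      have es1 : ∫ ω, (⟪X ω, t⟫ ^ 2) ^ 2 ∂P = ∫ ω, ⟪X ω, t⟫ ^ 4 ∂P :=
        integral_congr_ae (Filter.Eventually.of_forall fun ω => by ring)
      have es2 : ∫ ω, ((X ω i) ^ 2) ^ 2 ∂P
          = ∫ ω, ⟪X ω, EuclideanSpace.single i (1:ℝ)⟫ ^ 4 ∂P :=
        integral_congr_ae (Filter.Eventually.of_forall fun ω => by simp only [hsingle]; ring)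
      rw [es1, es2] at hcs
      refine hcs.trans ?_
      have b1 := hsqrt4 t
      have b2 := hsqrt4 (EuclideanSpace.single i 1)
      have es3 : ∫ ω, ⟪X ω, EuclideanSpace.single i (1:ℝ)⟫ ^ 2 ∂P
          = ∫ ω, X ω i * X ω i ∂P :=
        integral_congr_ae (Filter.Eventually.of_forall fun ω => by simp only [hsingle]; ring)
      rw [es3] at b2
      exact mul_le_mul b1 b2 (Real.sqrt_nonneg _) (by positivity)
    calc ∑ i, ∫ ω, ⟪X ω, t⟫ ^ 2 * (X ω i) ^ 2 ∂P
        ≤ ∑ i, (L ^ 2 * ∫ ω, ⟪X ω, t⟫ ^ 2 ∂P) * (L ^ 2 * ∫ ω, X ω i * X ω i ∂P) :=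
          Finset.sum_le_sum fun i _ => step i
      _ = ∑ i, (L ^ 4 * ∫ ω, ⟪X ω, t⟫ ^ 2 ∂P) * ∫ ω, X ω i * X ω i ∂P :=
          Finset.sum_congr rfl fun i _ => by ring
      _ = (L ^ 4 * ∫ ω, ⟪X ω, t⟫ ^ 2 ∂P) * ∑ i, ∫ ω, X ω i * X ω i ∂P :=
          (Finset.mul_sum _ _ _).symm
      _ = L ^ 4 * (∫ ω, ⟪X ω, t⟫ ^ 2 ∂P) * (covMat P X).trace := by rw [htrace]
  -- quadratic form bound
  have hquad : ∀ t : EuclideanSpace ℝ (Fin d),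
      ∫ ω, ⟪X ω, t⟫ ^ 2 ∂P ≤ matOpNorm (covMat P X) * ‖t‖ ^ 2 := by
    intro t
    have hb := covMat_bilin P X hprodX t t
    have heq : ∫ ω, ⟪X ω, t⟫ * ⟪X ω, t⟫ ∂P = ∫ ω, ⟪X ω, t⟫ ^ 2 ∂P :=
      integral_congr_ae (Filter.Eventually.of_forall fun ω => by ring)
    rw [heq] at hb
    rw [← hb]
    set T := Matrix.toEuclideanCLM (𝕜 := ℝ) (covMat P X) with hT
    calc ⟪T t, t⟫ ≤ ‖T t‖ * ‖t‖ := real_inner_le_norm _ _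
      _ ≤ ‖T‖ * ‖t‖ * ‖t‖ :=
          mul_le_mul_of_nonneg_right (T.le_opNorm t) (norm_nonneg t)
      _ = matOpNorm (covMat P X) * ‖t‖ ^ 2 := by unfold matOpNorm; rw [← hT]; ring
  -- conclusion
  refine matOpNorm_le_of_bilin _ _ ?_ ?_
  · have : 0 < α ^ 2 := by positivity
    positivity
  intro u v
  rw [map_sub, ContinuousLinearMap.sub_apply, inner_sub_left]
  rw [covMat_bilin P Y hprodY u v, covMat_bilin P X hprodX u v]
  have hYint : Integrable (fun ω => ⟪Y ω, u⟫ * ⟪Y ω, v⟫) P := by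
    refine (integrable_const (α ^ 2 * ‖u‖ * ‖v‖)).mono'
      ((hinnY u).mul (hinnY v)).aestronglyMeasurable ?_
    filter_upwards with ω
    rw [Real.norm_eq_abs, abs_mul]
    have hYnorm : ‖Y ω‖ ≤ α := by
      rcases hYcase ω with ⟨hω, hYω⟩ | ⟨_, hYω⟩
      · rw [hYω]; exact hω
      · rw [hYω]; simpa using hα.le
    calc |⟪Y ω, u⟫| * |⟪Y ω, v⟫| ≤ (‖Y ω‖ * ‖u‖) * (‖Y ω‖ * ‖v‖) :=
          mul_le_mul (abs_real_inner_le_norm _ _) (abs_real_inner_le_norm _ _)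
            (abs_nonneg _) (by positivity)
      _ ≤ (α * ‖u‖) * (α * ‖v‖) :=
          mul_le_mul (mul_le_mul_of_nonneg_right hYnorm (norm_nonneg u))
            (mul_le_mul_of_nonneg_right hYnorm (norm_nonneg v)) (by positivity) (by positivity)
      _ = α ^ 2 * ‖u‖ * ‖v‖ := by ring
  rw [← integral_sub hYint (hmul1 u v)]
  set g := fun ω => (⟪X ω, u⟫ ^ 2 * ‖X ω‖ ^ 2 + ⟪X ω, v⟫ ^ 2 * ‖X ω‖ ^ 2) / (2 * α ^ 2)
    with hgdef
  have hgint : Integrable g P := ((hintnorm u).add (hintnorm v)).div_const _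
  have hle : ∫ ω, (⟪Y ω, u⟫ * ⟪Y ω, v⟫ - ⟪X ω, u⟫ * ⟪X ω, v⟫) ∂P ≤ ∫ ω, g ω ∂P := by
    refine le_trans (le_abs_self _) ?_
    have habs : ‖∫ ω, (⟪Y ω, u⟫ * ⟪Y ω, v⟫ - ⟪X ω, u⟫ * ⟪X ω, v⟫) ∂P‖
        ≤ ∫ ω, ‖⟪Y ω, u⟫ * ⟪Y ω, v⟫ - ⟪X ω, u⟫ * ⟪X ω, v⟫‖ ∂P :=
      norm_integral_le_integral_norm _
    rw [Real.norm_eq_abs] at habs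
    refine le_trans habs ?_
    refine integral_mono (hYint.sub (hmul1 u v)).norm hgint ?_
    intro ω
    rcases hYcase ω with ⟨_, hYω⟩ | ⟨hω, hYω⟩
    · simp only [Real.norm_eq_abs, hYω, sub_self, abs_zero]
      unfold g
      positivity
    · simp only [Real.norm_eq_abs, hYω]
      simp only [inner_zero_left, zero_mul, zero_sub, abs_neg, abs_mul]
      have hαX : α ^ 2 ≤ ‖X ω‖ ^ 2 := by nlinarith [norm_nonneg (X ω)]
      have h1 : |⟪X ω, u⟫| * |⟪X ω, v⟫| ≤ (⟪X ω, u⟫ ^ 2 + ⟪X ω, v⟫ ^ 2) / 2 := by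
        nlinarith [sq_nonneg (|⟪X ω, u⟫| - |⟪X ω, v⟫|), sq_abs ⟪X ω, u⟫, sq_abs ⟪X ω, v⟫]
      refine h1.trans ?_
      unfold g
      have key : ∀ a b n : ℝ, α ^ 2 ≤ n →
          (a ^ 2 + b ^ 2) / 2 ≤ (a ^ 2 * n + b ^ 2 * n) / (2 * α ^ 2) := by
        intro a b n hn
        rw [div_le_div_iff₀ (by norm_num) (by positivity)]
        nlinarith [mul_nonneg (add_nonneg (sq_nonneg a) (sq_nonneg b)) (sub_nonneg.mpr hn)]
      exact key _ _ _ hαX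
  refine hle.trans ?_
  unfold g
  rw [integral_div, integral_add (hintnorm u) (hintnorm v)]
  have bu : ∫ ω, ⟪X ω, u⟫ ^ 2 * ‖X ω‖ ^ 2 ∂P
      ≤ L ^ 4 * (matOpNorm (covMat P X) * ‖u‖ ^ 2) * (covMat P X).trace :=
    (key2 u).trans (mul_le_mul_of_nonneg_right
      (mul_le_mul_of_nonneg_left (hquad u) (by positivity)) htr0)
  have bv : ∫ ω, ⟪X ω, v⟫ ^ 2 * ‖X ω‖ ^ 2 ∂P
      ≤ L ^ 4 * (matOpNorm (covMat P X) * ‖v‖ ^ 2) * (covMat P X).trace :=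
    (key2 v).trans (mul_le_mul_of_nonneg_right
      (mul_le_mul_of_nonneg_left (hquad v) (by positivity)) htr0)
  calc ((∫ ω, ⟪X ω, u⟫ ^ 2 * ‖X ω‖ ^ 2 ∂P) + ∫ ω, ⟪X ω, v⟫ ^ 2 * ‖X ω‖ ^ 2 ∂P) / (2 * α ^ 2)
      ≤ ((L ^ 4 * (matOpNorm (covMat P X) * ‖u‖ ^ 2) * (covMat P X).trace)
        + (L ^ 4 * (matOpNorm (covMat P X) * ‖v‖ ^ 2) * (covMat P X).trace)) / (2 * α ^ 2) :=
        (div_le_div_iff_of_pos_right (by positivity)).mpr (add_le_add bu bv)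
    _ = L ^ 4 * matOpNorm (covMat P X) * (covMat P X).trace / α ^ 2 / 2
          * (‖u‖ ^ 2 + ‖v‖ ^ 2) := by
        field_simp
end

section
/- There exists a constant c(L) depending only on L such that the following holds. Let X be a centered random vector in ℝ^d satisfying the L₄–L₂ norm equivalence with constant L, with covariance Σ = 𝔼(X⊗X). For α > 0, let X̃ = X·1_{‖X‖₂ ≤ α} and Σ̃ = 𝔼(X̃⊗X̃). Then |Tr(Σ̃) − Tr(Σ)| ≤ c(L) Tr(Σ)² / α². -/
open MeasureTheory ProbabilityTheory
open scoped RealInnerProductSpace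

/-- For every `L ≥ 1` there is `c(L) > 0` such that for any centered `X` satisfying the
`L₄-L₂` norm equivalence with constant `L` and any truncation level `α > 0`, the covariance
of the truncation `X̃ = X 1_{‖X‖₂ ≤ α}` satisfies `|Tr(Σ̃) - Tr(Σ)| ≤ c(L) Tr(Σ)² / α²`. -/
theorem truncated_cov_trace_bound :
    ∀ L : ℝ, 1 ≤ L → ∃ c : ℝ, 0 < c ∧
      ∀ (Ω : Type*) [MeasurableSpace Ω] (P : Measure Ω) [IsProbabilityMeasure P]
        (d : ℕ) (X : Ω → EuclideanSpace ℝ (Fin d)),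
        Measurable X → IsCentered P X → SatisfiesL4L2 P X L →
        ∀ α : ℝ, 0 < α →
          |(covMat P (trunc X α)).trace - (covMat P X).trace| ≤
            c * (covMat P X).trace ^ 2 / α ^ 2 := by
  intro L hL
  have hL0 : (0:ℝ) < L := lt_of_lt_of_le one_pos hL
  refine ⟨L ^ 4, by positivity, ?_⟩
  intro Ω _ P _ d X hX hcent hL4 α hα
  classical
  have hXi : ∀ i, Measurable fun ω => X ω i := fun i => (measurable_pi_apply i).comp ((WithLp.measurable_ofLp _ _).comp hX)
  have hinner : ∀ i ω, ⟪X ω, EuclideanSpace.single i (1:ℝ)⟫ = X ω i := by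
    intro i ω
    rw [EuclideanSpace.inner_single_right]
    simp
  -- fourth moments of coordinates
  have hint4 : ∀ i, Integrable (fun ω => (X ω i) ^ 4) P := by
    intro i
    have := (hL4 (EuclideanSpace.single i (1:ℝ))).1
    simpa [hinner i] using this
  set a : Fin d → ℝ := fun i => ∫ ω, (X ω i) ^ 4 ∂P with ha_def
  set b : Fin d → ℝ := fun i => ∫ ω, (X ω i) ^ 2 ∂P with hb_def
  have ha0 : ∀ i, 0 ≤ a i := fun i => integral_nonneg fun ω => by positivity
  have hb0 : ∀ i, 0 ≤ b i := fun i => integral_nonneg fun ω => by positivity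
  have hb4 : ∀ i, (a i) ^ ((1:ℝ)/4) ≤ L * (b i) ^ ((1:ℝ)/2) := by
    intro i
    have := (hL4 (EuclideanSpace.single i (1:ℝ))).2
    simpa [hinner i, ha_def, hb_def] using this
  -- √(a i) ≤ L² b i
  have hsqrt : ∀ i, Real.sqrt (a i) ≤ L ^ 2 * b i := by
    intro i
    have h1 : Real.sqrt (a i) = ((a i) ^ ((1:ℝ)/4)) ^ 2 := by
      rw [← Real.rpow_natCast ((a i) ^ ((1:ℝ)/4)) 2, ← Real.rpow_mul (ha0 i),
        Real.sqrt_eq_rpow]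
      norm_num
    have h2 : ((b i) ^ ((1:ℝ)/2)) ^ 2 = b i := by
      rw [← Real.rpow_natCast ((b i) ^ ((1:ℝ)/2)) 2, ← Real.rpow_mul (hb0 i)]
      norm_num
    calc Real.sqrt (a i) = ((a i) ^ ((1:ℝ)/4)) ^ 2 := h1
      _ ≤ (L * (b i) ^ ((1:ℝ)/2)) ^ 2 := by
          apply pow_le_pow_left₀ (Real.rpow_nonneg (ha0 i) _) (hb4 i)
      _ = L ^ 2 * b i := by rw [mul_pow, h2]
  -- integrability of squares
  have hint2 : ∀ i, Integrable (fun ω => (X ω i) ^ 2) P := by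
    intro i
    refine Integrable.mono' ((integrable_const (1:ℝ)).add (hint4 i))
      ((hXi i).pow_const 2).aestronglyMeasurable (Filter.Eventually.of_forall fun ω => ?_)
    simp only [Real.norm_eq_abs, abs_of_nonneg (sq_nonneg (X ω i) : (0:ℝ) ≤ (X ω i)^2), Pi.add_apply]
    nlinarith [sq_nonneg ((X ω i) ^ 2 - 1)]
  -- integrability of products of squares
  have hintij : ∀ i j, Integrable (fun ω => (X ω i) ^ 2 * (X ω j) ^ 2) P := by
    intro i j
    refine Integrable.mono' (((hint4 i).add (hint4 j)).div_const 2)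
      (((hXi i).pow_const 2).mul ((hXi j).pow_const 2)).aestronglyMeasurable
      (Filter.Eventually.of_forall fun ω => ?_)
    simp only [Real.norm_eq_abs, Pi.add_apply]
    rw [abs_of_nonneg (by positivity : (0:ℝ) ≤ (X ω i)^2 * (X ω j)^2)]
    nlinarith [sq_nonneg ((X ω i) ^ 2 - (X ω j) ^ 2)]
  -- Cauchy–Schwarz for products of squares
  have hCS : ∀ i j, (∫ ω, (X ω i) ^ 2 * (X ω j) ^ 2 ∂P) ≤
      Real.sqrt (a i) * Real.sqrt (a j) := by
    intro i j
    have hpq : Real.HolderConjugate 2 2 := Real.HolderConjugate.two_two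
    have h2 : (ENNReal.ofReal (2:ℝ)) = 2 := by norm_num
    have hm : ∀ k, MemLp (fun ω => (X ω k) ^ 2) (ENNReal.ofReal (2:ℝ)) P := by
      intro k
      rw [h2]
      exact (memLp_two_iff_integrable_sq ((hXi k).pow_const 2).aestronglyMeasurable).2
        (by simpa [← pow_mul] using hint4 k)
    have := integral_mul_le_Lp_mul_Lq_of_nonneg (μ := P) hpq
      (Filter.Eventually.of_forall (fun ω => by positivity))
      (Filter.Eventually.of_forall (fun ω => by positivity)) (hm i) (hm j)
    have hrw : ∀ k, (∫ ω, ((X ω k) ^ 2) ^ (2:ℝ) ∂P) ^ ((1:ℝ)/2) = Real.sqrt (a k) := by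
      intro k
      have : (fun ω => ((X ω k) ^ 2) ^ (2:ℝ)) = fun ω => (X ω k) ^ 4 := by
        funext ω
        rw [show ((2:ℝ)) = ((2:ℕ):ℝ) by norm_num, Real.rpow_natCast]
        ring
      rw [this, Real.sqrt_eq_rpow]
    calc (∫ ω, (X ω i) ^ 2 * (X ω j) ^ 2 ∂P)
        ≤ (∫ ω, ((X ω i) ^ 2) ^ (2:ℝ) ∂P) ^ ((1:ℝ)/2) *
          (∫ ω, ((X ω j) ^ 2) ^ (2:ℝ) ∂P) ^ ((1:ℝ)/2) := this
      _ = Real.sqrt (a i) * Real.sqrt (a j) := by rw [hrw i, hrw j]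
  -- norm squared as sum
  have hnormsq : ∀ x : EuclideanSpace ℝ (Fin d), ‖x‖ ^ 2 = ∑ i, (x i) ^ 2 := by
    intro x
    rw [EuclideanSpace.norm_eq, Real.sq_sqrt (by positivity)]
    simp [sq_abs]
  -- trace of Σ
  have htr : (covMat P X).trace = ∑ i, b i := by
    simp [Matrix.trace, covMat, Matrix.diag, hb_def, sq]
  have htr0 : 0 ≤ (covMat P X).trace := htr ▸ Finset.sum_nonneg fun i _ => hb0 i
  -- fourth moment of norm
  have hnorm4 : ∀ ω, ‖X ω‖ ^ 4 = ∑ i, ∑ j, (X ω i) ^ 2 * (X ω j) ^ 2 := by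
    intro ω
    rw [show (4:ℕ) = 2 * 2 by norm_num, pow_mul, hnormsq, sq, Finset.sum_mul_sum]
  have hS4int : Integrable (fun ω => ‖X ω‖ ^ 4) P := by
    have : (fun ω => ‖X ω‖ ^ 4) =
        fun ω => ∑ i, ∑ j, (X ω i) ^ 2 * (X ω j) ^ 2 := funext hnorm4
    rw [this]
    exact integrable_finset_sum _ fun i _ => integrable_finset_sum _ fun j _ => hintij i j
  have hS4 : (∫ ω, ‖X ω‖ ^ 4 ∂P) ≤ L ^ 4 * (covMat P X).trace ^ 2 := by
    have h1 : (∫ ω, ‖X ω‖ ^ 4 ∂P) = ∑ i, ∑ j, ∫ ω, (X ω i) ^ 2 * (X ω j) ^ 2 ∂P := by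
      simp_rw [hnorm4]
      rw [integral_finset_sum _ fun i _ => integrable_finset_sum _ fun j _ => hintij i j]
      exact Finset.sum_congr rfl fun i _ => integral_finset_sum _ fun j _ => hintij i j
    rw [h1, htr]
    calc (∑ i, ∑ j, ∫ ω, (X ω i) ^ 2 * (X ω j) ^ 2 ∂P)
        ≤ ∑ i, ∑ j, Real.sqrt (a i) * Real.sqrt (a j) :=
          Finset.sum_le_sum fun i _ => Finset.sum_le_sum fun j _ => hCS i j
      _ = (∑ i, Real.sqrt (a i)) * (∑ j, Real.sqrt (a j)) := by
          rw [Finset.sum_mul_sum]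
      _ ≤ (L ^ 2 * ∑ i, b i) * (L ^ 2 * ∑ i, b i) := by
          have hsum : (∑ i, Real.sqrt (a i)) ≤ L ^ 2 * ∑ i, b i := by
            rw [Finset.mul_sum]
            exact Finset.sum_le_sum fun i _ => hsqrt i
          have hnn : 0 ≤ ∑ i, Real.sqrt (a i) :=
            Finset.sum_nonneg fun i _ => Real.sqrt_nonneg _
          exact mul_le_mul hsum hsum hnn (le_trans hnn hsum)
      _ = L ^ 4 * (∑ i, b i) ^ 2 := by ring
  -- truncation coordinates
  have htrunc_coord : ∀ ω i, trunc X α ω i = if ‖X ω‖ ≤ α then X ω i else 0 := by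
    intro ω i
    simp only [trunc]
    split <;> simp
  -- integrability of truncated squares and tail squares
  set g : Fin d → Ω → ℝ := fun i ω => if ‖X ω‖ ≤ α then 0 else (X ω i) ^ 2 with hg_def
  have hmeas_set : MeasurableSet {ω | ‖X ω‖ ≤ α} := by
    exact measurableSet_le hX.norm measurable_const
  have hgmeas : ∀ i, Measurable (g i) := by
    intro i
    exact Measurable.ite hmeas_set measurable_const ((hXi i).pow_const 2)
  have hgint : ∀ i, Integrable (g i) P := by
    intro i
    refine Integrable.mono' (hint2 i) (hgmeas i).aestronglyMeasurable
      (Filter.Eventually.of_forall fun ω => ?_)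
    simp only [hg_def, Real.norm_eq_abs]
    split
    · simpa using sq_nonneg (X ω i)
    · rw [abs_of_nonneg (by positivity)]
  have htrint : ∀ i, Integrable (fun ω => (trunc X α ω i) ^ 2) P := by
    intro i
    refine Integrable.mono' (hint2 i)
      (Measurable.aestronglyMeasurable ?_) (Filter.Eventually.of_forall fun ω => ?_)
    · simp only [htrunc_coord]
      exact ((Measurable.ite hmeas_set (hXi i) measurable_const).pow_const 2)
    · rw [htrunc_coord, Real.norm_eq_abs, abs_of_nonneg (sq_nonneg _)]
      split_ifs
      · exact le_refl _
      · simpa using sq_nonneg (X ω i)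
  -- expression for the difference of traces
  have hdiff : (covMat P X).trace - (covMat P (trunc X α)).trace = ∑ i, ∫ ω, g i ω ∂P := by
    have htr2 : (covMat P (trunc X α)).trace = ∑ i, ∫ ω, (trunc X α ω i) ^ 2 ∂P := by
      simp [Matrix.trace, covMat, Matrix.diag, sq]
    rw [htr, htr2, ← Finset.sum_sub_distrib]
    refine Finset.sum_congr rfl fun i _ => ?_
    rw [hb_def, ← integral_sub (hint2 i) (htrint i)]
    refine integral_congr_ae (Filter.Eventually.of_forall fun ω => ?_)
    simp only [hg_def, htrunc_coord]
    split <;> ring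
  have hg0 : ∀ i, 0 ≤ ∫ ω, g i ω ∂P := by
    intro i
    refine integral_nonneg fun ω => ?_
    simp only [hg_def]
    split
    · exact le_refl _
    · positivity
  have hDpos : 0 ≤ (covMat P X).trace - (covMat P (trunc X α)).trace := by
    rw [hdiff]; exact Finset.sum_nonneg fun i _ => hg0 i
  -- bound the difference by the fourth moment
  have hDbound : (covMat P X).trace - (covMat P (trunc X α)).trace ≤
      (∫ ω, ‖X ω‖ ^ 4 ∂P) / α ^ 2 := by
    rw [hdiff, ← integral_finset_sum _ fun i _ => hgint i]
    rw [div_eq_mul_inv, ← integral_mul_const]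
    refine integral_mono_of_nonneg (Filter.Eventually.of_forall fun ω => ?_)
      (hS4int.mul_const _) (Filter.Eventually.of_forall fun ω => ?_)
    · refine Finset.sum_nonneg fun i _ => ?_
      simp only [hg_def]
      split
      · exact le_refl _
      · positivity
    · simp only [hg_def]
      by_cases h : ‖X ω‖ ≤ α
      · simp [h]
        positivity
      · push_neg at h
        simp only [h.not_ge, if_false]
        rw [← hnormsq (X ω), ← div_eq_mul_inv, le_div_iff₀ (by positivity : (0:ℝ) < α ^ 2)]
        have h2 : α ^ 2 ≤ ‖X ω‖ ^ 2 := by nlinarith [norm_nonneg (X ω)]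
        nlinarith [sq_nonneg ‖X ω‖, h2]
  -- assemble
  have habs : |(covMat P (trunc X α)).trace - (covMat P X).trace| =
      (covMat P X).trace - (covMat P (trunc X α)).trace := by
    rw [abs_sub_comm, abs_of_nonneg hDpos]
  rw [habs]
  calc (covMat P X).trace - (covMat P (trunc X α)).trace
      ≤ (∫ ω, ‖X ω‖ ^ 4 ∂P) / α ^ 2 := hDbound
    _ ≤ L ^ 4 * (covMat P X).trace ^ 2 / α ^ 2 := by
        exact div_le_div_of_nonneg_right hS4 (by positivity) |>.trans_eq rfl
end

section
/- Let X be a centered random vector in ℝ^d satisfying the L₄–L₂ norm equivalence with constant L, let Σ = 𝔼(X⊗X), and for α > 0 let X̃ = X·1_{‖X‖₂ ≤ α}. Define v(X)² = sup_{v ∈ S^{d−1}} 𝔼⟨X,v⟩⁴. Then R_{X̃} ≤ v(X) and v(X) ≤ L²‖Σ‖; in particular R_{X̃} ≤ L²‖Σ‖. -/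
open MeasureTheory ProbabilityTheory
open scoped RealInnerProductSpace

/-- The weak fourth moment `v(X) = (sup_{v ∈ S^{d-1}} 𝔼⟨X,v⟩⁴)^{1/2}`. -/
noncomputable def weakFourth {Ω : Type*} [MeasurableSpace Ω] (P : Measure Ω) {d : ℕ}
    (X : Ω → EuclideanSpace ℝ (Fin d)) : ℝ :=
  Real.sqrt (⨆ v : Metric.sphere (0 : EuclideanSpace ℝ (Fin d)) 1,
    ∫ ω, ⟪X ω, (v : EuclideanSpace ℝ (Fin d))⟫ ^ 4 ∂P)

section Aux
variable {Ω : Type*} [MeasurableSpace Ω] {P : Measure Ω} [IsProbabilityMeasure P] {d : ℕ}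

lemma inner_eq_sum (x y : EuclideanSpace ℝ (Fin d)) : ⟪x, y⟫ = ∑ i, x i * y i := by
  simp [PiLp.inner_apply, RCLike.inner_apply, conj_trivial]
  exact Finset.sum_congr rfl fun i _ => mul_comm _ _

lemma quadform_le (A : Matrix (Fin d) (Fin d) ℝ) (v : EuclideanSpace ℝ (Fin d))
    (hv : ‖v‖ = 1) : ∑ i, ∑ j, v i * (A i j * v j) ≤ matOpNorm A := by
  have h1 : ∑ i, ∑ j, v i * (A i j * v j) = ⟪v, Matrix.toEuclideanCLM (𝕜 := ℝ) A v⟫ := by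
    have hco : ∀ i, (Matrix.toEuclideanCLM (𝕜 := ℝ) A v) i = ∑ j, A i j * v j := fun i => rfl
    simp only [PiLp.inner_apply, RCLike.inner_apply, conj_trivial, hco, Finset.mul_sum]
    exact Finset.sum_congr rfl fun i _ => by
      rw [Finset.sum_mul]; exact Finset.sum_congr rfl fun j _ => by ring
  rw [h1]
  calc ⟪v, Matrix.toEuclideanCLM (𝕜 := ℝ) A v⟫ ≤ ‖v‖ * ‖Matrix.toEuclideanCLM (𝕜 := ℝ) A v‖ :=
        real_inner_le_norm _ _
    _ ≤ ‖v‖ * (matOpNorm A * ‖v‖) :=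
        mul_le_mul_of_nonneg_left ((Matrix.toEuclideanCLM (𝕜 := ℝ) A).le_opNorm v) (norm_nonneg _)
    _ = matOpNorm A := by rw [hv]; ring

lemma integrable_of_bounded {g : Ω → ℝ} (hg : Measurable g) (C : ℝ)
    (h : ∀ ω, |g ω| ≤ C) : Integrable g P :=
  Integrable.mono' (integrable_const C) hg.aestronglyMeasurable (ae_of_all _ h)

lemma abs_apply_le_norm (z : EuclideanSpace ℝ (Fin d)) (i : Fin d) : |z i| ≤ ‖z‖ := by
  rw [EuclideanSpace.norm_eq]
  rw [show |z i| = Real.sqrt (|z i|^2) by rw [Real.sqrt_sq_eq_abs, abs_abs]]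
  apply Real.sqrt_le_sqrt
  exact Finset.single_le_sum (f := fun j => ‖z j‖^2) (fun j _ => sq_nonneg _) (Finset.mem_univ i)

end Aux

section Aux2
variable {Ω : Type*} [MeasurableSpace Ω] {P : Measure Ω} [IsProbabilityMeasure P] {d : ℕ}
  {X : Ω → EuclideanSpace ℝ (Fin d)} {L : ℝ}

lemma meas_inner (hX : Measurable X) (t : EuclideanSpace ℝ (Fin d)) :
    Measurable fun ω => ⟪X ω, t⟫ := hX.inner measurable_const

lemma int_sq (hX : Measurable X) (h42 : SatisfiesL4L2 P X L) (t : EuclideanSpace ℝ (Fin d)) :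
    Integrable (fun ω => ⟪X ω, t⟫ ^ 2) P := by
  refine Integrable.mono' ((integrable_const 1).add (h42 t).1)
    (((meas_inner hX t).pow_const 2).aestronglyMeasurable) (ae_of_all _ fun ω => ?_)
  have := sq_nonneg (⟪X ω, t⟫ ^ 2 - 1)
  rw [Real.norm_eq_abs, abs_of_nonneg (sq_nonneg _), Pi.add_apply]
  nlinarith [sq_nonneg (⟪X ω, t⟫)]

lemma apply_eq_inner (x : EuclideanSpace ℝ (Fin d)) (i : Fin d) :
    x i = ⟪x, EuclideanSpace.single i 1⟫ := by
  simp [inner_eq_sum, Finset.sum_eq_single i, EuclideanSpace.single_apply]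

lemma int_comp_sq (hX : Measurable X) (h42 : SatisfiesL4L2 P X L) (i : Fin d) :
    Integrable (fun ω => X ω i ^ 2) P := by
  have := int_sq hX h42 (EuclideanSpace.single i 1)
  simpa [← apply_eq_inner] using this

lemma meas_apply (hX : Measurable X) (i : Fin d) : Measurable fun ω => X ω i := by
  have : (fun ω => X ω i) = fun ω => ⟪X ω, EuclideanSpace.single i 1⟫ :=
    funext fun ω => apply_eq_inner (X ω) i
  rw [this]; exact meas_inner hX _

lemma int_mul (hX : Measurable X) (h42 : SatisfiesL4L2 P X L) (i j : Fin d) :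
    Integrable (fun ω => X ω i * X ω j) P := by
  refine Integrable.mono' (((int_comp_sq hX h42 i).add (int_comp_sq hX h42 j)).div_const 2)
    ?_ (ae_of_all _ fun ω => ?_)
  · exact ((meas_apply hX i).mul (meas_apply hX j)).aestronglyMeasurable
  · simp only [Real.norm_eq_abs, Pi.add_apply]
    have := sq_nonneg (X ω i - X ω j)
    have := sq_nonneg (X ω i + X ω j)
    rw [abs_le]
    constructor <;> nlinarith

lemma integral_inner_sq (hX : Measurable X) (h42 : SatisfiesL4L2 P X L)
    (v : EuclideanSpace ℝ (Fin d)) :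
    ∫ ω, ⟪X ω, v⟫ ^ 2 ∂P = ∑ i, ∑ j, v i * (covMat P X i j * v j) := by
  have hpt : ∀ ω, ⟪X ω, v⟫ ^ 2 = ∑ i, ∑ j, (X ω i * X ω j) * (v i * v j) := by
    intro ω
    rw [inner_eq_sum, sq, Finset.sum_mul_sum]
    exact Finset.sum_congr rfl fun i _ => Finset.sum_congr rfl fun j _ => by ring
  rw [integral_congr_ae (ae_of_all _ hpt)]
  rw [integral_finset_sum _ fun i _ => integrable_finset_sum _ fun j _ =>
    (int_mul hX h42 i j).mul_const _]
  refine Finset.sum_congr rfl fun i _ => ?_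
  rw [integral_finset_sum _ fun j _ => (int_mul hX h42 i j).mul_const _]
  refine Finset.sum_congr rfl fun j _ => ?_
  rw [integral_mul_const]
  show (∫ ω, X ω i * X ω j ∂P) * (v i * v j) = v i * ((∫ ω, X ω i * X ω j ∂P) * v j)
  ring

lemma integral_inner_sq_le (hX : Measurable X) (h42 : SatisfiesL4L2 P X L)
    (v : EuclideanSpace ℝ (Fin d)) (hv : ‖v‖ = 1) :
    ∫ ω, ⟪X ω, v⟫ ^ 2 ∂P ≤ matOpNorm (covMat P X) := by
  rw [integral_inner_sq hX h42 v]
  exact quadform_le _ v hv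

lemma integral_inner_pow4_le (hX : Measurable X) (h42 : SatisfiesL4L2 P X L) (hL : 1 ≤ L)
    (v : EuclideanSpace ℝ (Fin d)) (hv : ‖v‖ = 1) :
    ∫ ω, ⟪X ω, v⟫ ^ 4 ∂P ≤ (L ^ 2 * matOpNorm (covMat P X)) ^ 2 := by
  set a := ∫ ω, ⟪X ω, v⟫ ^ 4 ∂P with ha
  set b := ∫ ω, ⟪X ω, v⟫ ^ 2 ∂P with hb
  have ha0 : 0 ≤ a := integral_nonneg fun ω => by positivity
  have hb0 : 0 ≤ b := integral_nonneg fun ω => sq_nonneg _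
  have h := (h42 v).2
  have hL0 : (0:ℝ) ≤ L := le_trans zero_le_one hL
  have key : a ≤ L ^ 4 * b ^ 2 := by
    have h4 : (a ^ ((1:ℝ)/4)) ^ (4:ℕ) ≤ (L * b ^ ((1:ℝ)/2)) ^ (4:ℕ) :=
      pow_le_pow_left₀ (Real.rpow_nonneg ha0 _) h 4
    rwa [← Real.rpow_natCast (a ^ ((1:ℝ)/4)) 4, ← Real.rpow_mul ha0,
      show ((1:ℝ)/4 * (4:ℕ) : ℝ) = 1 by norm_num, Real.rpow_one,
      mul_pow, ← Real.rpow_natCast (b ^ ((1:ℝ)/2)) 4, ← Real.rpow_mul hb0,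
      show ((1:ℝ)/2 * (4:ℕ) : ℝ) = 2 by norm_num, Real.rpow_two] at h4
  have hbN : b ≤ matOpNorm (covMat P X) := integral_inner_sq_le hX h42 v hv
  have hN0 : 0 ≤ matOpNorm (covMat P X) := le_trans hb0 hbN
  calc a ≤ L ^ 4 * b ^ 2 := key
    _ ≤ L ^ 4 * matOpNorm (covMat P X) ^ 2 := by
        apply mul_le_mul_of_nonneg_left _ (by positivity)
        exact pow_le_pow_left₀ hb0 hbN 2
    _ = (L ^ 2 * matOpNorm (covMat P X)) ^ 2 := by ring

end Aux2

section Aux3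
variable {Ω : Type*} [MeasurableSpace Ω] {P : Measure Ω} [IsProbabilityMeasure P] {d : ℕ}
  {X : Ω → EuclideanSpace ℝ (Fin d)} {L α : ℝ}

lemma trunc_norm_le (hα : 0 ≤ α) (ω : Ω) : ‖trunc X α ω‖ ≤ α := by
  unfold trunc
  split
  · assumption
  · simpa using hα

lemma trunc_measurable (hX : Measurable X) : Measurable (trunc X α) := by
  unfold trunc
  exact Measurable.ite (measurableSet_le hX.norm measurable_const) hX measurable_const

lemma trunc_inner_abs_le (hα : 0 ≤ α) (ω : Ω) (w : EuclideanSpace ℝ (Fin d)) (hw : ‖w‖ = 1) :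
    |⟪trunc X α ω, w⟫| ≤ α := by
  calc |⟪trunc X α ω, w⟫| ≤ ‖trunc X α ω‖ * ‖w‖ := abs_real_inner_le_norm _ _
    _ ≤ α := by rw [hw, mul_one]; exact trunc_norm_le hα ω

lemma trunc_inner_pow4_le (ω : Ω) (w : EuclideanSpace ℝ (Fin d)) :
    ⟪trunc X α ω, w⟫ ^ 4 ≤ ⟪X ω, w⟫ ^ 4 := by
  unfold trunc
  split
  · exact le_refl _
  · rw [inner_zero_left, zero_pow (by norm_num : (4:ℕ) ≠ 0)]
    positivity

end Aux3

/-- For a centered `X` satisfying the `L₄-L₂` norm equivalence with constant `L` and any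
truncation level `α > 0`: `R_{X̃} ≤ v(X)`, `v(X) ≤ L² ‖Σ‖`, and in particular
`R_{X̃} ≤ L² ‖Σ‖`. -/
theorem weakVar_trunc_le
    {Ω : Type*} [MeasurableSpace Ω] (P : Measure Ω) [IsProbabilityMeasure P]
    {d : ℕ} (X : Ω → EuclideanSpace ℝ (Fin d)) (hX : Measurable X)
    (L : ℝ) (hL : 1 ≤ L) (hcent : IsCentered P X) (h42 : SatisfiesL4L2 P X L)
    (α : ℝ) (hα : 0 < α) :
    weakVar P (trunc X α) ≤ weakFourth P X ∧
    weakFourth P X ≤ L ^ 2 * matOpNorm (covMat P X) ∧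
    weakVar P (trunc X α) ≤ L ^ 2 * matOpNorm (covMat P X) := by
  have hα0 : (0:ℝ) ≤ α := hα.le
  set N := matOpNorm (covMat P X) with hN
  have hN0 : (0:ℝ) ≤ N := norm_nonneg _
  set S := ⨆ v : Metric.sphere (0 : EuclideanSpace ℝ (Fin d)) 1,
    ∫ ω, ⟪X ω, (v : EuclideanSpace ℝ (Fin d))⟫ ^ 4 ∂P with hSdef
  have hsnorm : ∀ v : Metric.sphere (0 : EuclideanSpace ℝ (Fin d)) 1,
      ‖(v : EuclideanSpace ℝ (Fin d))‖ = 1 := fun v => by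
    simpa using mem_sphere_zero_iff_norm.mp v.2
  have hvbound : ∀ v : Metric.sphere (0 : EuclideanSpace ℝ (Fin d)) 1,
      ∫ ω, ⟪X ω, (v : EuclideanSpace ℝ (Fin d))⟫ ^ 4 ∂P ≤ (L ^ 2 * N) ^ 2 := fun v =>
    integral_inner_pow4_le hX h42 hL _ (hsnorm v)
  have hbdd : BddAbove (Set.range fun v : Metric.sphere (0 : EuclideanSpace ℝ (Fin d)) 1 =>
      ∫ ω, ⟪X ω, (v : EuclideanSpace ℝ (Fin d))⟫ ^ 4 ∂P) := by
    refine ⟨(L ^ 2 * N) ^ 2, ?_⟩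
    rintro _ ⟨v, rfl⟩
    exact hvbound v
  have hS_nonneg : 0 ≤ S := Real.iSup_nonneg fun v => integral_nonneg fun ω => by positivity
  have hS_le : S ≤ (L ^ 2 * N) ^ 2 := Real.iSup_le hvbound (sq_nonneg _)
  have h2 : weakFourth P X ≤ L ^ 2 * N := by
    unfold weakFourth
    rw [← hSdef]
    calc Real.sqrt S ≤ Real.sqrt ((L ^ 2 * N) ^ 2) := Real.sqrt_le_sqrt hS_le
      _ = L ^ 2 * N := Real.sqrt_sq (by positivity)
  -- part 1
  set Z := trunc X α with hZdef
  have hZm : Measurable Z := trunc_measurable hX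
  have hZn : ∀ ω, ‖Z ω‖ ≤ α := trunc_norm_le hα0
  have hZij : ∀ i j, Integrable (fun ω => Z ω i * Z ω j) P := by
    intro i j
    refine integrable_of_bounded ((meas_apply hZm i).mul (meas_apply hZm j)) (α ^ 2)
      fun ω => ?_
    rw [abs_mul, sq]
    exact mul_le_mul ((abs_apply_le_norm _ _).trans (hZn ω))
      ((abs_apply_le_norm _ _).trans (hZn ω)) (abs_nonneg _) hα0
  have hZ4 : ∀ w : EuclideanSpace ℝ (Fin d), ‖w‖ = 1 →
      Integrable (fun ω => ⟪Z ω, w⟫ ^ 4) P := fun w hw =>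
    integrable_of_bounded ((hZm.inner measurable_const).pow_const 4) (α ^ 4) fun ω => by
      rw [abs_pow]
      exact pow_le_pow_left₀ (abs_nonneg _) (trunc_inner_abs_le hα0 ω w hw) 4
  have hZ4S : ∀ v : Metric.sphere (0 : EuclideanSpace ℝ (Fin d)) 1,
      ∫ ω, ⟪Z ω, (v : EuclideanSpace ℝ (Fin d))⟫ ^ 4 ∂P ≤ S := by
    intro v
    calc ∫ ω, ⟪Z ω, (v : EuclideanSpace ℝ (Fin d))⟫ ^ 4 ∂P
        ≤ ∫ ω, ⟪X ω, (v : EuclideanSpace ℝ (Fin d))⟫ ^ 4 ∂P :=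
          integral_mono (hZ4 _ (hsnorm v)) (h42 _).1 fun ω => trunc_inner_pow4_le ω _
      _ ≤ S := le_ciSup hbdd v
  have h1 : weakVar P Z ≤ weakFourth P X := by
    unfold weakVar weakFourth
    rw [← hSdef]
    apply Real.sqrt_le_sqrt
    apply Real.iSup_le _ hS_nonneg
    rintro ⟨u, v⟩
    show ∫ ω, (∑ i, ∑ j, (v : EuclideanSpace ℝ (Fin d)) i *
      (Z ω i * Z ω j - covMat P Z i j) * (u : EuclideanSpace ℝ (Fin d)) j) ^ 2 ∂P ≤ S
    set g : Ω → ℝ := fun ω => ⟪Z ω, (v : EuclideanSpace ℝ (Fin d))⟫ *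
      ⟪Z ω, (u : EuclideanSpace ℝ (Fin d))⟫ with hgdef
    set m : ℝ := ∑ i, ∑ j, (v : EuclideanSpace ℝ (Fin d)) i *
      covMat P Z i j * (u : EuclideanSpace ℝ (Fin d)) j with hmdef
    have hgsum : ∀ ω, g ω = ∑ i, ∑ j, (v : EuclideanSpace ℝ (Fin d)) i *
        (Z ω i * Z ω j) * (u : EuclideanSpace ℝ (Fin d)) j := by
      intro ω
      rw [hgdef]
      simp only
      rw [inner_eq_sum, inner_eq_sum, Finset.sum_mul_sum]
      exact Finset.sum_congr rfl fun i _ => Finset.sum_congr rfl fun j _ => by ring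
    have hpt : ∀ ω, (∑ i, ∑ j, (v : EuclideanSpace ℝ (Fin d)) i *
        (Z ω i * Z ω j - covMat P Z i j) * (u : EuclideanSpace ℝ (Fin d)) j) = g ω - m := by
      intro ω
      rw [hgsum ω, hmdef, ← Finset.sum_sub_distrib]
      refine Finset.sum_congr rfl fun i _ => ?_
      rw [← Finset.sum_sub_distrib]
      exact Finset.sum_congr rfl fun j _ => by ring
    have hgmeas : Measurable g := (hZm.inner measurable_const).mul (hZm.inner measurable_const)
    have hgbd : ∀ ω, |g ω| ≤ α ^ 2 := fun ω => by
      rw [hgdef]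
      simp only
      rw [abs_mul, sq]
      exact mul_le_mul (trunc_inner_abs_le hα0 ω _ (hsnorm v))
        (trunc_inner_abs_le hα0 ω _ (hsnorm u)) (abs_nonneg _) hα0
    have hg : Integrable g P := integrable_of_bounded hgmeas _ hgbd
    have hg2 : Integrable (fun ω => g ω ^ 2) P :=
      integrable_of_bounded (hgmeas.pow_const 2) ((α ^ 2) ^ 2) fun ω => by
        rw [abs_pow]
        exact pow_le_pow_left₀ (abs_nonneg _) (hgbd ω) 2
    have hm : ∫ ω, g ω ∂P = m := by
      rw [show (fun ω => g ω) = fun ω => ∑ i, ∑ j, (v : EuclideanSpace ℝ (Fin d)) i *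
        (Z ω i * Z ω j) * (u : EuclideanSpace ℝ (Fin d)) j from funext hgsum]
      rw [integral_finset_sum _ fun i _ => integrable_finset_sum _ fun j _ =>
        ((hZij i j).const_mul _).mul_const _]
      refine Finset.sum_congr rfl fun i _ => ?_
      rw [integral_finset_sum _ fun j _ => ((hZij i j).const_mul _).mul_const _]
      refine Finset.sum_congr rfl fun j _ => ?_
      rw [integral_mul_const, integral_const_mul]
      rfl
    calc ∫ ω, (∑ i, ∑ j, (v : EuclideanSpace ℝ (Fin d)) i *
          (Z ω i * Z ω j - covMat P Z i j) * (u : EuclideanSpace ℝ (Fin d)) j) ^ 2 ∂P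
        = ∫ ω, (g ω - m) ^ 2 ∂P := by
          exact integral_congr_ae (ae_of_all _ fun ω => by simp only [hpt ω])
      _ = ∫ ω, g ω ^ 2 ∂P - m ^ 2 := by
          have hi1 : Integrable (fun ω => (-(2 * m)) * g ω + m ^ 2) P := by
            exact (hg.const_mul _).add (integrable_const _)
          have hi2 : Integrable (fun ω => (-(2 * m)) * g ω) P := hg.const_mul _
          rw [show (fun ω => (g ω - m) ^ 2) = fun ω => g ω ^ 2 + ((-(2 * m)) * g ω + m ^ 2)
            from funext fun ω => by ring]
          rw [integral_add hg2 hi1, integral_add hi2 (integrable_const _),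
            integral_const_mul, hm, integral_const]
          simp [measure_univ]
          ring
      _ ≤ ∫ ω, g ω ^ 2 ∂P := by
          have := sq_nonneg m
          linarith
      _ ≤ ∫ ω, (⟪Z ω, (v : EuclideanSpace ℝ (Fin d))⟫ ^ 4 +
            ⟪Z ω, (u : EuclideanSpace ℝ (Fin d))⟫ ^ 4) / 2 ∂P := by
          refine integral_mono hg2 (((hZ4 _ (hsnorm v)).add (hZ4 _ (hsnorm u))).div_const 2)
            fun ω => ?_
          rw [hgdef]
          simp only
          nlinarith [sq_nonneg (⟪Z ω, (v : EuclideanSpace ℝ (Fin d))⟫ ^ 2 -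
            ⟪Z ω, (u : EuclideanSpace ℝ (Fin d))⟫ ^ 2),
            sq_nonneg (⟪Z ω, (v : EuclideanSpace ℝ (Fin d))⟫ *
            ⟪Z ω, (u : EuclideanSpace ℝ (Fin d))⟫)]
      _ = ((∫ ω, ⟪Z ω, (v : EuclideanSpace ℝ (Fin d))⟫ ^ 4 ∂P) +
            ∫ ω, ⟪Z ω, (u : EuclideanSpace ℝ (Fin d))⟫ ^ 4 ∂P) / 2 := by
          rw [integral_div, integral_add (hZ4 _ (hsnorm v)) (hZ4 _ (hsnorm u))]
      _ ≤ (S + S) / 2 := by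
          have h1 := hZ4S v
          have h2 := hZ4S u
          linarith
      _ = S := by ring
  exact ⟨h1, h2, h1.trans h2⟩
end

section
/- Let ε_1,…,ε_d be independent symmetric random variables taking values in {−1,1}, let α_1 ≥ α_2 ≥ … ≥ α_d ≥ 0, and set X = (α_1 ε_1, …, α_d ε_d) with covariance Σ = 𝔼(X⊗X). Then ‖Σ‖ = α_1², and for all u, v in the Euclidean unit sphere S^{d−1}, 𝔼(vᵀ(X⊗X − Σ)u)² ≤ 2(α_1 α_2)²; consequently R_X ≤ √2 · α_1 α_2. -/
open MeasureTheory ProbabilityTheory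
open scoped RealInnerProductSpace

/-- The random vector `X = (α₁ ε₁, …, α_d ε_d)`. -/
noncomputable def radVec {Ω : Type*} {d : ℕ} (α : Fin d → ℝ) (ε : Fin d → Ω → ℝ) :
    Ω → EuclideanSpace ℝ (Fin d) :=
  fun ω => (WithLp.equiv 2 (∀ _ : Fin d, ℝ)).symm fun i => α i * ε i ω

section Helpers

set_option linter.unusedSectionVars false

variable {Ω : Type*} [MeasurableSpace Ω] (P : Measure Ω) [IsProbabilityMeasure P]


lemma int_of_bdd {f : Ω → ℝ} (hm : Measurable f) (C : ℝ) (h : ∀ ω, ‖f ω‖ ≤ C) :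
    Integrable f P :=
  (integrable_const C).mono' hm.aestronglyMeasurable (Filter.Eventually.of_forall h)

variable {d : ℕ} {ε : Fin d → Ω → ℝ}

lemma eps_mean (hmeas : ∀ i, Measurable (ε i))
    (hsym : ∀ i, Measure.map (ε i) P = Measure.map (fun ω => -ε i ω) P) (i : Fin d) :
    ∫ ω, ε i ω ∂P = 0 := by
  have h1 : ∫ ω, ε i ω ∂P = ∫ x, x ∂(P.map (ε i)) :=
    (integral_map (hmeas i).aemeasurable measurable_id.aestronglyMeasurable).symm
  have h3 : ∫ x, x ∂(P.map (fun ω => -ε i ω)) = ∫ ω, -ε i ω ∂P :=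
    integral_map ((hmeas i).neg).aemeasurable measurable_id.aestronglyMeasurable
  have h4 : ∫ ω, -ε i ω ∂P = -∫ ω, ε i ω ∂P := integral_neg _
  rw [h1, hsym i, h3, h4] at *
  linarith [h1]

lemma eps_prod_integral (hmeas : ∀ i, Measurable (ε i))
    (hindep : iIndepFun ε P) (T : Finset (Fin d)) :
    ∫ ω, ∏ m ∈ T, ε m ω ∂P = ∏ m ∈ T, ∫ ω, ε m ω ∂P := by
  classical
  induction T using Finset.induction with
  | empty => simp
  | @insert a s ha ih =>
    have hind : IndepFun (∏ j ∈ s, ε j) (ε a) P :=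
      hindep.indepFun_finsetProd_of_notMem hmeas ha
    have hm1 : Measurable (∏ j ∈ s, ε j) := by
      have : (∏ j ∈ s, ε j) = fun ω => ∏ j ∈ s, ε j ω := by
        funext ω; simp [Finset.prod_apply]
      rw [this]; exact Finset.measurable_prod s fun i _ => hmeas i
    have hmul := hind.integral_fun_mul_eq_mul_integral hm1.aestronglyMeasurable (hmeas a).aestronglyMeasurable
    have h1 : ∫ ω, ∏ m ∈ Insert.insert a s, ε m ω ∂P
        = ∫ ω, ((∏ j ∈ s, ε j) * ε a) ω ∂P := by
      refine integral_congr_ae (Filter.Eventually.of_forall fun ω => ?_)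
      simp [Finset.prod_insert ha, Finset.prod_apply, mul_comm]
    rw [h1]
    rw [show (∫ ω, ((∏ j ∈ s, ε j) * ε a) ω ∂P) = ∫ ω, (∏ j ∈ s, ε j) ω * ε a ω ∂P from rfl]
    have : ∫ ω, (∏ j ∈ s, ε j) ω * ε a ω ∂P
        = (∫ ω, (∏ j ∈ s, ε j) ω ∂P) * ∫ ω, ε a ω ∂P := hmul
    rw [this, Finset.prod_insert ha, ← ih]
    simp only [Finset.prod_apply]
    ring

set_option linter.unusedSectionVars false

lemma prod_merge (x : Fin d → ℝ) (hx : ∀ m, x m * x m = 1) (A B : Finset (Fin d)) :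
    (∏ m ∈ A, x m) * ∏ m ∈ B, x m = ∏ m ∈ (A \ B) ∪ (B \ A), x m := by
  classical
  have hA : (∏ m ∈ A, x m) = (∏ m ∈ A \ B, x m) * ∏ m ∈ A ∩ B, x m := by
    rw [← Finset.prod_sdiff (Finset.inter_subset_left : A ∩ B ⊆ A)]
    have h : A \ (A ∩ B) = A \ B := by
      ext m; simp only [Finset.mem_sdiff, Finset.mem_inter]; tauto
    rw [h]
  have hB : (∏ m ∈ B, x m) = (∏ m ∈ B \ A, x m) * ∏ m ∈ A ∩ B, x m := by
    rw [← Finset.prod_sdiff (Finset.inter_subset_right : A ∩ B ⊆ B)]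
    have h : B \ (A ∩ B) = B \ A := by
      ext m; simp only [Finset.mem_sdiff, Finset.mem_inter]; tauto
    rw [h]
  rw [hA, hB, Finset.prod_union disjoint_sdiff_sdiff, mul_mul_mul_comm,
    ← Finset.prod_mul_distrib]
  have : ∏ m ∈ A ∩ B, (x m * x m) = 1 := Finset.prod_eq_one fun m _ => hx m
  rw [this, mul_one]

lemma eps_e4 (hmeas : ∀ i, Measurable (ε i))
    (hval : ∀ i ω, ε i ω = 1 ∨ ε i ω = -1)
    (hsym : ∀ i, Measure.map (ε i) P = Measure.map (fun ω => -ε i ω) P)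
    (hindep : iIndepFun ε P)
    (i j k l : Fin d) (hij : i ≠ j) (hkl : k ≠ l) :
    ∫ ω, ε i ω * ε j ω * (ε k ω * ε l ω) ∂P
      = if (k, l) = (i, j) ∨ (k, l) = (j, i) then 1 else 0 := by
  classical
  have hsq : ∀ m ω, ε m ω * ε m ω = 1 := by
    intro m ω; rcases hval m ω with h | h <;> simp [h]
  by_cases hc : (k, l) = (i, j) ∨ (k, l) = (j, i)
  · have hone : ∀ ω, ε i ω * ε j ω * (ε k ω * ε l ω) = 1 := by
      intro ω
      rcases hc with h | h <;>
      · injection h with h1 h2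
        subst h1; subst h2
        rcases hval k ω with e1 | e1 <;> rcases hval l ω with e2 | e2 <;> simp [e1, e2]
    rw [if_pos hc]
    rw [integral_congr_ae (Filter.Eventually.of_forall hone)]
    simp
  · rw [if_neg hc]
    push_neg at hc
    obtain ⟨hc1, hc2⟩ := hc
    set A : Finset (Fin d) := {i, j}
    set B : Finset (Fin d) := {k, l}
    have hAB : A ≠ B := by
      intro h
      have hk : k ∈ A := by rw [h]; simp [B]
      have hl : l ∈ A := by rw [h]; simp [B]
      simp only [A, Finset.mem_insert, Finset.mem_singleton] at hk hl
      rcases hk with hk | hk <;> rcases hl with hl | hl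
      · exact hkl (hk.trans hl.symm)
      · exact hc1 (by rw [hk, hl])
      · exact hc2 (by rw [hk, hl])
      · exact hkl (hk.trans hl.symm)
    have hpt : ∀ ω, ε i ω * ε j ω * (ε k ω * ε l ω)
        = ∏ m ∈ (A \ B) ∪ (B \ A), ε m ω := by
      intro ω
      rw [← prod_merge (fun m => ε m ω) (fun m => hsq m ω) A B,
        Finset.prod_pair hij, Finset.prod_pair hkl]
    have hne : ((A \ B) ∪ (B \ A)).Nonempty := by
      rw [Finset.nonempty_iff_ne_empty]
      intro h
      rw [Finset.union_eq_empty, Finset.sdiff_eq_empty_iff_subset,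
        Finset.sdiff_eq_empty_iff_subset] at h
      exact hAB (Finset.Subset.antisymm h.1 h.2)
    rw [integral_congr_ae (Filter.Eventually.of_forall hpt),
      eps_prod_integral P hmeas hindep]
    obtain ⟨m, hm⟩ := hne
    exact Finset.prod_eq_zero hm (eps_mean P hmeas hsym m)

lemma radVec_apply (α : Fin d → ℝ) (ω : Ω) (i : Fin d) :
    radVec α ε ω i = α i * ε i ω := rfl

lemma cov_eq (hmeas : ∀ i, Measurable (ε i))
    (hval : ∀ i ω, ε i ω = 1 ∨ ε i ω = -1)
    (hsym : ∀ i, Measure.map (ε i) P = Measure.map (fun ω => -ε i ω) P)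
    (hindep : iIndepFun ε P) (α : Fin d → ℝ) :
    covMat P (radVec α ε) = Matrix.diagonal (fun i => α i ^ 2) := by
  ext i j
  have h0 : covMat P (radVec α ε) i j = ∫ ω, (α i * ε i ω) * (α j * ε j ω) ∂P := rfl
  rw [h0]
  have h1 : ∀ ω, (α i * ε i ω) * (α j * ε j ω) = (α i * α j) * (ε i ω * ε j ω) := by
    intro ω; ring
  rw [integral_congr_ae (Filter.Eventually.of_forall h1), integral_const_mul]
  by_cases hij : i = j
  · subst hij
    have h2 : ∀ ω, ε i ω * ε i ω = 1 := by
      intro ω; rcases hval i ω with h | h <;> simp [h]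
    rw [integral_congr_ae (Filter.Eventually.of_forall h2)]
    simp [Matrix.diagonal, sq]
  · have hind : IndepFun (ε i) (ε j) P := hindep.indepFun hij
    have h3 : ∫ ω, ε i ω * ε j ω ∂P = (∫ ω, ε i ω ∂P) * ∫ ω, ε j ω ∂P :=
      hind.integral_fun_mul_eq_mul_integral (hmeas i).aestronglyMeasurable (hmeas j).aestronglyMeasurable
    rw [h3, eps_mean P hmeas hsym i]
    simp [hij]

lemma sum_sq_eq_one {d : ℕ} (x : EuclideanSpace ℝ (Fin d)) (hx : ‖x‖ = 1) :
    ∑ i, x i ^ 2 = 1 := by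
  have h := EuclideanSpace.norm_eq x
  rw [hx] at h
  have h2 : (∑ i, ‖x i‖ ^ 2) = 1 := by
    rw [← Real.sq_sqrt (show (0:ℝ) ≤ ∑ i, ‖x i‖ ^ 2 by positivity), ← h]; norm_num
  simpa [Real.norm_eq_abs, sq_abs] using h2

lemma matOpNorm_diag {d : ℕ} (hd : 0 < d) (w : Fin d → ℝ) (h0 : ∀ i, 0 ≤ w i)
    (hmax : ∀ i, w i ≤ w ⟨0, hd⟩) :
    ‖Matrix.toEuclideanCLM (𝕜 := ℝ) (n := Fin d) (Matrix.diagonal w)‖ = w ⟨0, hd⟩ := by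
  set i0 : Fin d := ⟨0, hd⟩
  set T := Matrix.toEuclideanCLM (𝕜 := ℝ) (n := Fin d) (Matrix.diagonal w)
  have hT : ∀ (x : EuclideanSpace ℝ (Fin d)) i, T x i = w i * x i := by
    intro x i
    rw [show T x i = (Matrix.diagonal w).mulVec x i from rfl, Matrix.mulVec_diagonal]
  refine le_antisymm (ContinuousLinearMap.opNorm_le_bound T (h0 i0) fun x => ?_) ?_
  · rw [EuclideanSpace.norm_eq, EuclideanSpace.norm_eq]
    rw [show w i0 * Real.sqrt (∑ i, ‖x i‖ ^ 2)
        = Real.sqrt (w i0 ^ 2 * ∑ i, ‖x i‖ ^ 2) by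
      rw [Real.sqrt_mul (sq_nonneg _), Real.sqrt_sq (h0 i0)]]
    apply Real.sqrt_le_sqrt
    rw [Finset.mul_sum]
    apply Finset.sum_le_sum
    intro i _
    rw [hT x i]
    rw [Real.norm_eq_abs, Real.norm_eq_abs, abs_mul, mul_pow, sq_abs, sq_abs]
    apply mul_le_mul_of_nonneg_right _ (sq_nonneg _)
    exact pow_le_pow_left₀ (h0 i) (hmax i) 2
  · have he : ‖(EuclideanSpace.single i0 (1:ℝ))‖ = 1 := by
      rw [EuclideanSpace.norm_single]; norm_num
    have hTe : T (EuclideanSpace.single i0 (1:ℝ)) = w i0 • EuclideanSpace.single i0 (1:ℝ) := by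
      refine PiLp.ext fun i => ?_
      rw [hT]
      by_cases h : i = i0
      · subst h; simp [EuclideanSpace.single_apply]
      · simp [EuclideanSpace.single_apply, h]
    have := T.le_opNorm (EuclideanSpace.single i0 (1:ℝ))
    rw [hTe, he, mul_one, norm_smul, he, mul_one, Real.norm_eq_abs,
      abs_of_nonneg (h0 i0)] at this
    exact this

lemma part2 (hd : 2 ≤ d) (hmeas : ∀ i, Measurable (ε i))
    (hval : ∀ i ω, ε i ω = 1 ∨ ε i ω = -1)
    (hsym : ∀ i, Measure.map (ε i) P = Measure.map (fun ω => -ε i ω) P)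
    (hindep : iIndepFun ε P)
    (α : Fin d → ℝ) (hmono : Antitone α) (hnonneg : ∀ i, 0 ≤ α i)
    (u v : EuclideanSpace ℝ (Fin d)) (hu : ‖u‖ = 1) (hv : ‖v‖ = 1) :
    ∫ ω, (∑ i, ∑ j, v i *
        (radVec α ε ω i * radVec α ε ω j - covMat P (radVec α ε) i j) * u j) ^ 2 ∂P ≤
      2 * (α ⟨0, by linarith⟩ * α ⟨1, by linarith⟩) ^ 2 := by
  classical
  set i0 : Fin d := ⟨0, by linarith⟩ with hi0
  set i1 : Fin d := ⟨1, by linarith⟩ with hi1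
  set t : Fin d × Fin d → ℝ :=
    fun p => if p.1 = p.2 then 0 else v p.1 * (α p.1 * α p.2) * u p.2 with ht
  have hcov := cov_eq P hmeas hval hsym hindep α
  have hsq : ∀ m ω, ε m ω * ε m ω = 1 := by
    intro m ω; rcases hval m ω with h | h <;> simp [h]
  -- Step A
  have hA : ∀ ω, (∑ i, ∑ j, v i *
      (radVec α ε ω i * radVec α ε ω j - covMat P (radVec α ε) i j) * u j)
      = ∑ p : Fin d × Fin d, t p * (ε p.1 ω * ε p.2 ω) := by
    intro ω
    rw [Fintype.sum_prod_type]
    refine Finset.sum_congr rfl fun i _ => Finset.sum_congr rfl fun j _ => ?_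
    rw [hcov, radVec_apply, radVec_apply]
    by_cases hij : i = j
    · subst hij
      rw [Matrix.diagonal_apply_eq]
      simp only [ht, if_pos rfl]
      linear_combination v i * α i ^ 2 * u i * hsq i ω
    · rw [Matrix.diagonal_apply_ne _ hij]
      simp only [ht, if_neg hij]
      ring
  -- integrability
  have hintg : ∀ p q : Fin d × Fin d,
      Integrable (fun ω => (t p * (ε p.1 ω * ε p.2 ω)) * (t q * (ε q.1 ω * ε q.2 ω))) P := by
    intro p q
    refine int_of_bdd P ?_ (|t p| * |t q|) ?_
    · exact ((measurable_const.mul ((hmeas p.1).mul (hmeas p.2))).mul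
        (measurable_const.mul ((hmeas q.1).mul (hmeas q.2))))
    · intro ω
      rcases hval p.1 ω with e1 | e1 <;> rcases hval p.2 ω with e2 | e2 <;>
        rcases hval q.1 ω with e3 | e3 <;> rcases hval q.2 ω with e4 | e4 <;>
        simp [e1, e2, e3, e4, abs_mul]
  -- key term value
  have key : ∀ p q : Fin d × Fin d,
      ∫ ω, (t p * (ε p.1 ω * ε p.2 ω)) * (t q * (ε q.1 ω * ε q.2 ω)) ∂P
        = (if q = p then t p * t q else 0)
          + (if q = (p.2, p.1) ∧ p.1 ≠ p.2 then t p * t q else 0) := by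
    intro p q
    have hre : ∀ ω, (t p * (ε p.1 ω * ε p.2 ω)) * (t q * (ε q.1 ω * ε q.2 ω))
        = (t p * t q) * (ε p.1 ω * ε p.2 ω * (ε q.1 ω * ε q.2 ω)) := fun ω => by ring
    rw [integral_congr_ae (Filter.Eventually.of_forall hre), integral_const_mul]
    by_cases hp : p.1 = p.2
    · have ht0 : t p = 0 := by simp [ht, hp]
      simp [ht0, hp]
    · by_cases hq : q.1 = q.2
      · have ht0 : t q = 0 := by simp [ht, hq]
        have hqp : q ≠ p := fun h => hp (h ▸ hq)
        have hqs : q ≠ (p.2, p.1) := by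
          intro h
          apply hp
          have h1 : q.1 = p.2 := congrArg Prod.fst h
          have h2 : q.2 = p.1 := congrArg Prod.snd h
          rw [← h1, ← h2, hq]
        simp [ht0, hqp, hqs]
      · rw [eps_e4 P hmeas hval hsym hindep p.1 p.2 q.1 q.2 hp hq]
        simp only [Prod.mk.eta]
        by_cases h1 : q = p
        · subst h1
          have h2 : ¬ (q = (q.2, q.1)) := fun h => hp (congrArg Prod.fst h)
          simp [h2]
        · by_cases h2 : q = (p.2, p.1)
          · simp [h1, h2, hp]
            exact fun hcontr => absurd (congrArg Prod.fst hcontr).symm hp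
          · simp [h1, h2]
  -- compute the integral
  have hexp : ∫ ω, (∑ i, ∑ j, v i *
      (radVec α ε ω i * radVec α ε ω j - covMat P (radVec α ε) i j) * u j) ^ 2 ∂P
      = ∑ p : Fin d × Fin d, (t p ^ 2
          + if p.1 ≠ p.2 then t p * t (p.2, p.1) else 0) := by
    have hre2 : ∀ ω, (∑ i, ∑ j, v i *
        (radVec α ε ω i * radVec α ε ω j - covMat P (radVec α ε) i j) * u j) ^ 2
        = ∑ p : Fin d × Fin d, ∑ q : Fin d × Fin d,
            (t p * (ε p.1 ω * ε p.2 ω)) * (t q * (ε q.1 ω * ε q.2 ω)) := by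
      intro ω
      rw [hA ω, sq, Finset.sum_mul_sum]
    rw [integral_congr_ae (Filter.Eventually.of_forall hre2)]
    rw [integral_finset_sum _ fun p _ => integrable_finset_sum _ fun q _ => hintg p q]
    refine Finset.sum_congr rfl fun p _ => ?_
    rw [integral_finset_sum _ fun q _ => hintg p q]
    have : ∑ q : Fin d × Fin d, (∫ ω,
        (t p * (ε p.1 ω * ε p.2 ω)) * (t q * (ε q.1 ω * ε q.2 ω)) ∂P)
        = ∑ q : Fin d × Fin d, ((if q = p then t p * t q else 0)
          + (if q = (p.2, p.1) ∧ p.1 ≠ p.2 then t p * t q else 0)) :=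
      Finset.sum_congr rfl fun q _ => key p q
    rw [this, Finset.sum_add_distrib]
    congr 1
    · rw [Finset.sum_ite_eq' Finset.univ p (fun q => t p * t q)]
      simp [sq]
    · by_cases hp : p.1 = p.2
      · simp [hp]
      · simp only [hp, ne_eq, not_false_iff, and_true, if_neg]
        rw [Finset.sum_ite_eq' Finset.univ (p.2, p.1) (fun q => t p * t q)]
        simp [hp]
  rw [hexp]
  -- final bound
  have hαα : ∀ i j : Fin d, i ≠ j → α i * α j ≤ α i0 * α i1 := by
    intro i j hij
    have h0le : ∀ k : Fin d, α k ≤ α i0 := fun k => hmono (by simp [Fin.le_def, hi0])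
    have h1le : ∀ k : Fin d, k ≠ i0 → α k ≤ α i1 := by
      intro k hk
      refine hmono ?_
      have : k.val ≠ 0 := fun h => hk (Fin.ext (by simp [h, hi0]))
      simp only [Fin.le_def, hi1]
      omega
    by_cases hi : i = i0
    · have hj : j ≠ i0 := fun h => hij (hi.trans h.symm)
      rw [hi]
      exact mul_le_mul_of_nonneg_left (h1le j hj) (hnonneg i0)
    · calc α i * α j ≤ α i1 * α i0 :=
          mul_le_mul (h1le i hi) (h0le j) (hnonneg j) (hnonneg i1)
        _ = α i0 * α i1 := mul_comm _ _
  have hswap : ∑ p : Fin d × Fin d, t (p.2, p.1) ^ 2 = ∑ p : Fin d × Fin d, t p ^ 2 :=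
    Fintype.sum_equiv (Equiv.prodComm _ _) _ _ (fun p => rfl)
  have h1 : ∑ p : Fin d × Fin d, (t p ^ 2 + if p.1 ≠ p.2 then t p * t (p.2, p.1) else 0)
      ≤ ∑ p : Fin d × Fin d, (t p ^ 2 + (t p ^ 2 + t (p.2, p.1) ^ 2) / 2) := by
    refine Finset.sum_le_sum fun p _ => ?_
    by_cases hp : p.1 = p.2
    · simp only [hp, ne_eq, not_true_eq_false, if_false]
      nlinarith [sq_nonneg (t p), sq_nonneg (t (p.2, p.1))]
    · simp only [hp, ne_eq, not_false_iff, if_true]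
      nlinarith [sq_nonneg (t p - t (p.2, p.1))]
  have h2 : ∑ p : Fin d × Fin d, (t p ^ 2 + (t p ^ 2 + t (p.2, p.1) ^ 2) / 2)
      = 2 * ∑ p : Fin d × Fin d, t p ^ 2 := by
    rw [Finset.sum_add_distrib]
    have : ∑ p : Fin d × Fin d, (t p ^ 2 + t (p.2, p.1) ^ 2) / 2
        = ((∑ p : Fin d × Fin d, t p ^ 2) + ∑ p : Fin d × Fin d, t (p.2, p.1) ^ 2) / 2 := by
      rw [← Finset.sum_div, Finset.sum_add_distrib]
    rw [this, hswap]
    ring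
  have h3 : ∑ p : Fin d × Fin d, t p ^ 2
      ≤ (α i0 * α i1) ^ 2 * ∑ p : Fin d × Fin d, (v p.1) ^ 2 * (u p.2) ^ 2 := by
    rw [Finset.mul_sum]
    refine Finset.sum_le_sum fun p _ => ?_
    by_cases hp : p.1 = p.2
    · simp only [ht, if_pos hp]
      have h0 : (0:ℝ) ^ 2 = 0 := by norm_num
      rw [h0]
      positivity
    · simp only [ht, if_neg hp]
      calc (v p.1 * (α p.1 * α p.2) * u p.2) ^ 2
          = (α p.1 * α p.2) ^ 2 * ((v p.1) ^ 2 * (u p.2) ^ 2) := by ring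
        _ ≤ (α i0 * α i1) ^ 2 * ((v p.1) ^ 2 * (u p.2) ^ 2) := by
            refine mul_le_mul_of_nonneg_right ?_ (by positivity)
            refine pow_le_pow_left₀ (mul_nonneg (hnonneg p.1) (hnonneg p.2)) (hαα p.1 p.2 hp) 2
  have h4 : ∑ p : Fin d × Fin d, (v p.1) ^ 2 * (u p.2) ^ 2 = 1 := by
    have hps : ∑ p : Fin d × Fin d, (v p.1) ^ 2 * (u p.2) ^ 2
        = (∑ i, v i ^ 2) * (∑ j, u j ^ 2) := by
      rw [Finset.sum_mul_sum]
      exact Fintype.sum_prod_type _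
    rw [hps, sum_sq_eq_one v hv, sum_sq_eq_one u hu, one_mul]
  rw [h4, mul_one] at h3
  linarith

end Helpers

/-- For independent symmetric `±1`-valued `ε₁,…,ε_d`, weights `α₁ ≥ … ≥ α_d ≥ 0` and
`X = (α₁ ε₁, …, α_d ε_d)` with covariance `Σ`: `‖Σ‖ = α₁²`, for all unit vectors `u, v`
`𝔼(vᵀ(X⊗X − Σ)u)² ≤ 2(α₁α₂)²`, and consequently `R_X ≤ √2 α₁ α₂`. -/
theorem rademacher_example
    {Ω : Type*} [MeasurableSpace Ω] (P : Measure Ω) [IsProbabilityMeasure P]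
    {d : ℕ} (hd : 2 ≤ d) (ε : Fin d → Ω → ℝ) (hmeas : ∀ i, Measurable (ε i))
    (hval : ∀ i ω, ε i ω = 1 ∨ ε i ω = -1)
    (hsym : ∀ i, Measure.map (ε i) P = Measure.map (fun ω => -ε i ω) P)
    (hindep : iIndepFun ε P)
    (α : Fin d → ℝ) (hmono : Antitone α) (hnonneg : ∀ i, 0 ≤ α i) :
    matOpNorm (covMat P (radVec α ε)) = α ⟨0, by omega⟩ ^ 2 ∧
    (∀ u v : EuclideanSpace ℝ (Fin d), ‖u‖ = 1 → ‖v‖ = 1 →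
      ∫ ω, (∑ i, ∑ j, v i *
          (radVec α ε ω i * radVec α ε ω j - covMat P (radVec α ε) i j) * u j) ^ 2 ∂P ≤
        2 * (α ⟨0, by omega⟩ * α ⟨1, by omega⟩) ^ 2) ∧
    weakVar P (radVec α ε) ≤ Real.sqrt 2 * (α ⟨0, by omega⟩ * α ⟨1, by omega⟩) := by
  classical
  have hcov := cov_eq P hmeas hval hsym hindep α
  set i0 : Fin d := ⟨0, by omega⟩
  set i1 : Fin d := ⟨1, by omega⟩
  refine ⟨?_, ?_, ?_⟩
  · have hnorm := matOpNorm_diag (show 0 < d by omega) (fun i => α i ^ 2)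
      (fun i => sq_nonneg _)
      (fun i => pow_le_pow_left₀ (hnonneg i)
        (hmono (show (⟨0, show 0 < d by omega⟩ : Fin d) ≤ i by simp [Fin.le_def])) 2)
    show ‖Matrix.toEuclideanCLM (𝕜 := ℝ) (n := Fin d) (covMat P (radVec α ε))‖ = _
    rw [hcov]
    exact hnorm
  · exact fun u v hu hv => part2 P hd hmeas hval hsym hindep α hmono hnonneg u v hu hv
  · have hsph : (EuclideanSpace.single i0 (1:ℝ)) ∈
        Metric.sphere (0 : EuclideanSpace ℝ (Fin d)) 1 := by
      rw [mem_sphere_zero_iff_norm, EuclideanSpace.norm_single]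
      norm_num
    haveI : Nonempty (Metric.sphere (0 : EuclideanSpace ℝ (Fin d)) 1 ×
        Metric.sphere (0 : EuclideanSpace ℝ (Fin d)) 1) :=
      ⟨⟨⟨_, hsph⟩, ⟨_, hsph⟩⟩⟩
    have hb : weakVarSq P (radVec α ε) ≤ 2 * (α i0 * α i1) ^ 2 := by
      refine ciSup_le fun p => ?_
      exact part2 P hd hmeas hval hsym hindep α hmono hnonneg
        (p.1 : EuclideanSpace ℝ (Fin d)) (p.2 : EuclideanSpace ℝ (Fin d))
        (mem_sphere_zero_iff_norm.mp p.1.2) (mem_sphere_zero_iff_norm.mp p.2.2)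
    calc weakVar P (radVec α ε) ≤ Real.sqrt (2 * (α i0 * α i1) ^ 2) :=
        Real.sqrt_le_sqrt hb
      _ = Real.sqrt 2 * (α i0 * α i1) := by
        rw [Real.sqrt_mul (by norm_num), Real.sqrt_sq (mul_nonneg (hnonneg _) (hnonneg _))]
end

section
/- Let Y be a centered random vector in ℝ^d with 𝔼‖Y‖₂⁴ < ∞ and covariance Σ = 𝔼(Y⊗Y). Then ‖𝔼((Y⊗Y − Σ)²)‖ ≤ d · R_Y², where R_Y² = sup_{v ∈ S^{d−1}, u ∈ S^{d−1}} 𝔼(vᵀ(Y⊗Y − Σ)u)². -/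
open MeasureTheory ProbabilityTheory
open scoped RealInnerProductSpace

section Aux
variable {Ω : Type*} [MeasurableSpace Ω] {P : Measure Ω}

lemma aux_abs_coord_le_norm {d : ℕ} (x : EuclideanSpace ℝ (Fin d)) (i : Fin d) : |x i| ≤ ‖x‖ := by
  rw [EuclideanSpace.norm_eq, ← Real.sqrt_sq_eq_abs]
  apply Real.sqrt_le_sqrt
  calc x i ^ 2 = ‖x i‖ ^ 2 := by rw [Real.norm_eq_abs, sq_abs]
    _ ≤ ∑ j, ‖x j‖ ^ 2 :=
      Finset.single_le_sum (f := fun j => ‖x j‖ ^ 2) (fun j _ => sq_nonneg _) (Finset.mem_univ i)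

lemma aux_integrable_sum_sq {ι : Type*} [Fintype ι] (c : Ω → ι → ℝ)
    (h : ∀ i j, Integrable (fun ω => c ω i * c ω j) P) :
    Integrable (fun ω => (∑ i, c ω i) ^ 2) P := by
  have he : (fun ω => (∑ i, c ω i) ^ 2) = fun ω => ∑ i, ∑ j, c ω i * c ω j := by
    funext ω; rw [sq, Finset.sum_mul_sum]
  rw [he]
  exact integrable_finset_sum _ fun i _ => integrable_finset_sum _ fun j _ => h i j

end Aux


/-- For a centered random vector `Y` in `ℝ^d` with `𝔼‖Y‖₂⁴ < ∞` and covariance `Σ`,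
`‖𝔼((Y⊗Y - Σ)²)‖ ≤ d · R_Y²`. -/
theorem opNorm_second_moment_le_dim_mul_weakVarSq
    {Ω : Type*} [MeasurableSpace Ω] (P : Measure Ω) [IsProbabilityMeasure P]
    {d : ℕ} (Y : Ω → EuclideanSpace ℝ (Fin d)) (hY : Measurable Y)
    (hY4 : Integrable (fun ω => ‖Y ω‖ ^ 4) P) (hcent : IsCentered P Y) :
    matOpNorm (Matrix.of fun i j =>
        ∫ ω, ((outerMat (Y ω) - covMat P Y) * (outerMat (Y ω) - covMat P Y)) i j ∂P) ≤
      d * weakVarSq P Y := by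
  classical
  set m : Ω → Fin d → Fin d → ℝ := fun ω i j => Y ω i * Y ω j - covMat P Y i j with hm_def
  -- coordinate measurability
  have hYi : ∀ i, Measurable fun ω => Y ω i := fun i =>
    ((continuous_apply i).comp (PiLp.continuous_ofLp (p := 2) (β := fun _ : Fin d => ℝ))).measurable.comp hY
  have hmi : ∀ i j, Measurable fun ω => m ω i j := fun i j =>
    ((hYi i).mul (hYi j)).sub measurable_const
  -- integrability
  have hInt2 : Integrable (fun ω => ‖Y ω‖ ^ 2) P := by
    apply Integrable.mono' ((integrable_const (1 : ℝ)).add hY4)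
    · exact (hY.norm.pow_const 2).aestronglyMeasurable
    · filter_upwards with ω
      rw [Real.norm_eq_abs, abs_of_nonneg (by positivity)]
      simp only [Pi.add_apply]
      nlinarith [norm_nonneg (Y ω), sq_nonneg (‖Y ω‖ ^ 2 - 1)]
  have hIntYY : ∀ i j, Integrable (fun ω => Y ω i * Y ω j) P := by
    intro i j
    apply Integrable.mono' hInt2 ((hYi i).mul (hYi j)).aestronglyMeasurable
    filter_upwards with ω
    rw [Real.norm_eq_abs, Pi.mul_apply, abs_mul]
    calc |Y ω i| * |Y ω j| ≤ ‖Y ω‖ * ‖Y ω‖ := by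
          apply mul_le_mul (aux_abs_coord_le_norm _ i) (aux_abs_coord_le_norm _ j)
            (abs_nonneg _) (norm_nonneg _)
      _ = ‖Y ω‖ ^ 2 := (sq ‖Y ω‖).symm
  have hInt4 : ∀ i j k l, Integrable (fun ω => Y ω i * Y ω j * (Y ω k * Y ω l)) P := by
    intro i j k l
    apply Integrable.mono' hY4
      ((((hYi i).mul (hYi j)).mul ((hYi k).mul (hYi l))).aestronglyMeasurable)
    filter_upwards with ω
    rw [Real.norm_eq_abs, Pi.mul_apply, Pi.mul_apply, Pi.mul_apply, abs_mul, abs_mul, abs_mul]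
    have h1 := aux_abs_coord_le_norm (Y ω) i
    have h2 := aux_abs_coord_le_norm (Y ω) j
    have h3 := aux_abs_coord_le_norm (Y ω) k
    have h4 := aux_abs_coord_le_norm (Y ω) l
    have hn := norm_nonneg (Y ω)
    calc |Y ω i| * |Y ω j| * (|Y ω k| * |Y ω l|)
        ≤ ‖Y ω‖ * ‖Y ω‖ * (‖Y ω‖ * ‖Y ω‖) := by
          gcongr <;> positivity
      _ = ‖Y ω‖ ^ 4 := by ring
  have hm2 : ∀ i j k l, Integrable (fun ω => m ω i j * m ω k l) P := by
    intro i j k l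
    have he : (fun ω => m ω i j * m ω k l) = fun ω =>
        Y ω i * Y ω j * (Y ω k * Y ω l) - covMat P Y k l * (Y ω i * Y ω j)
          - covMat P Y i j * (Y ω k * Y ω l) + covMat P Y i j * covMat P Y k l := by
      funext ω; simp only [hm_def]; ring
    rw [he]
    exact (((hInt4 i j k l).sub ((hIntYY i j).const_mul _)).sub
      ((hIntYY k l).const_mul _)).add (integrable_const _)
  -- symmetry of m
  have hsymm : ∀ ω i j, m ω i j = m ω j i := by
    intro ω i j
    simp only [hm_def, covMat, Matrix.of_apply]
    rw [mul_comm (Y ω i) (Y ω j)]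
    congr 1
    congr 1
    funext ω'
    rw [mul_comm]
  -- weakVarSq is nonneg
  have hR0 : 0 ≤ weakVarSq P Y :=
    Real.iSup_nonneg fun p => integral_nonneg fun ω => sq_nonneg _
  have hC : (0 : ℝ) ≤ d * weakVarSq P Y := by positivity
  -- integrability of bilinear forms squared
  have hbil : ∀ u v : EuclideanSpace ℝ (Fin d),
      Integrable (fun ω => (∑ i, ∑ j, v i * m ω i j * u j) ^ 2) P := by
    intro u v
    have he : (fun ω => (∑ i, ∑ j, v i * m ω i j * u j) ^ 2)
        = fun ω => (∑ p : Fin d × Fin d, v p.1 * m ω p.1 p.2 * u p.2) ^ 2 := by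
      funext ω; rw [Fintype.sum_prod_type]
    rw [he]
    apply aux_integrable_sum_sq
    intro p q
    have he2 : (fun ω => v p.1 * m ω p.1 p.2 * u p.2 * (v q.1 * m ω q.1 q.2 * u q.2))
        = fun ω => (v p.1 * u p.2 * v q.1 * u q.2) * (m ω p.1 p.2 * m ω q.1 q.2) := by
      funext ω; ring
    rw [he2]
    exact (hm2 _ _ _ _).const_mul _
  -- key bound: per direction and coordinate
  have hBint : Integrable (fun ω => (∑ i, ∑ j, |m ω i j|) ^ 2) P := by
    have he : (fun ω => (∑ i, ∑ j, |m ω i j|) ^ 2)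
        = fun ω => (∑ p : Fin d × Fin d, |m ω p.1 p.2|) ^ 2 := by
      funext ω; rw [Fintype.sum_prod_type]
    rw [he]
    apply aux_integrable_sum_sq
    intro p q
    have he2 : (fun ω => |m ω p.1 p.2| * |m ω q.1 q.2|)
        = fun ω => |m ω p.1 p.2 * m ω q.1 q.2| := by
      funext ω; rw [abs_mul]
    rw [he2]; exact (hm2 _ _ _ _).abs
  have hcoord : ∀ z : Metric.sphere (0 : EuclideanSpace ℝ (Fin d)) 1, ∀ i,
      |(z : EuclideanSpace ℝ (Fin d)) i| ≤ 1 := by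
    intro z i
    refine (aux_abs_coord_le_norm _ i).trans ?_
    rw [mem_sphere_zero_iff_norm.mp z.2]
  have hB : BddAbove (Set.range fun p : Metric.sphere (0 : EuclideanSpace ℝ (Fin d)) 1 ×
        Metric.sphere (0 : EuclideanSpace ℝ (Fin d)) 1 =>
      ∫ ω, (∑ i, ∑ j,
        (p.2 : EuclideanSpace ℝ (Fin d)) i * (Y ω i * Y ω j - covMat P Y i j) *
        (p.1 : EuclideanSpace ℝ (Fin d)) j) ^ 2 ∂P) := by
    refine ⟨∫ ω, (∑ i, ∑ j, |m ω i j|) ^ 2 ∂P, ?_⟩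
    rintro r ⟨p, rfl⟩
    refine integral_mono (hbil _ _) hBint fun ω => ?_
    rw [← sq_abs (∑ i, ∑ j, _)]
    apply pow_le_pow_left₀ (abs_nonneg _)
    calc |∑ i, ∑ j, (p.2 : EuclideanSpace ℝ (Fin d)) i * (Y ω i * Y ω j - covMat P Y i j) *
            (p.1 : EuclideanSpace ℝ (Fin d)) j|
        ≤ ∑ i, |∑ j, (p.2 : EuclideanSpace ℝ (Fin d)) i * (Y ω i * Y ω j - covMat P Y i j) *
            (p.1 : EuclideanSpace ℝ (Fin d)) j| := Finset.abs_sum_le_sum_abs _ _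
      _ ≤ ∑ i, ∑ j, |(p.2 : EuclideanSpace ℝ (Fin d)) i * (Y ω i * Y ω j - covMat P Y i j) *
            (p.1 : EuclideanSpace ℝ (Fin d)) j| :=
          Finset.sum_le_sum fun i _ => Finset.abs_sum_le_sum_abs _ _
      _ ≤ ∑ i, ∑ j, |m ω i j| := by
          apply Finset.sum_le_sum; intro i _; apply Finset.sum_le_sum; intro j _
          rw [abs_mul, abs_mul]
          calc |(p.2 : EuclideanSpace ℝ (Fin d)) i| * |Y ω i * Y ω j - covMat P Y i j| *
                |(p.1 : EuclideanSpace ℝ (Fin d)) j|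
              ≤ 1 * |Y ω i * Y ω j - covMat P Y i j| * 1 := by
                have := hcoord p.2 i; have := hcoord p.1 j
                gcongr <;> first | assumption | positivity
            _ = |m ω i j| := by rw [one_mul, mul_one]
  have hkey : ∀ v : EuclideanSpace ℝ (Fin d), ‖v‖ = 1 → ∀ k : Fin d,
      ∫ ω, (∑ j, m ω k j * v j) ^ 2 ∂P ≤ weakVarSq P Y := by
    intro v hv k
    have hmem : (EuclideanSpace.single k (1 : ℝ)) ∈
        Metric.sphere (0 : EuclideanSpace ℝ (Fin d)) 1 := by
      rw [mem_sphere_zero_iff_norm, EuclideanSpace.norm_single]; norm_num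
    have hvmem : v ∈ Metric.sphere (0 : EuclideanSpace ℝ (Fin d)) 1 :=
      mem_sphere_zero_iff_norm.mpr hv
    have hle := le_ciSup hB (⟨⟨v, hvmem⟩, ⟨EuclideanSpace.single k 1, hmem⟩⟩ :
      Metric.sphere (0 : EuclideanSpace ℝ (Fin d)) 1 ×
      Metric.sphere (0 : EuclideanSpace ℝ (Fin d)) 1)
    have hsum : ∀ ω, ∑ i, ∑ j, (EuclideanSpace.single k (1 : ℝ)) i *
        (Y ω i * Y ω j - covMat P Y i j) * v j = ∑ j, m ω k j * v j := by
      intro ω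
      have h0 : ∀ b ∈ Finset.univ, b ≠ k →
          (∑ j, (EuclideanSpace.single k (1 : ℝ)) b * (Y ω b * Y ω j - covMat P Y b j) * v j)
            = 0 := by
        intro b _ hb
        apply Finset.sum_eq_zero; intro j _
        rw [EuclideanSpace.single_apply, if_neg hb]; ring
      rw [Finset.sum_eq_single_of_mem k (Finset.mem_univ k) h0]
      apply Finset.sum_congr rfl; intro j _
      rw [EuclideanSpace.single_apply, if_pos rfl]
      simp [hm_def]
    have heq : ∫ ω, (∑ j, m ω k j * v j) ^ 2 ∂P
        = ∫ ω, (∑ i, ∑ j, (EuclideanSpace.single k (1 : ℝ)) i *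
            (Y ω i * Y ω j - covMat P Y i j) * v j) ^ 2 ∂P := by
      apply integral_congr_ae; filter_upwards with ω; rw [hsum ω]
    rw [heq]
    exact hle
  -- integrability of products of rows
  have hprod : ∀ (v v' : EuclideanSpace ℝ (Fin d)) (k : Fin d),
      Integrable (fun ω => (∑ i, m ω k i * v i) * (∑ j, m ω k j * v' j)) P := by
    intro v v' k
    have he : (fun ω => (∑ i, m ω k i * v i) * (∑ j, m ω k j * v' j))
        = fun ω => ∑ i, ∑ j, (v i * v' j) * (m ω k i * m ω k j) := by
      funext ω; rw [Finset.sum_mul_sum]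
      exact Finset.sum_congr rfl fun i _ => Finset.sum_congr rfl fun j _ => by ring
    rw [he]
    exact integrable_finset_sum _ fun i _ =>
      integrable_finset_sum _ fun j _ => (hm2 _ _ _ _).const_mul _
  have hsqint : ∀ (v : EuclideanSpace ℝ (Fin d)) (k : Fin d),
      Integrable (fun ω => (∑ j, m ω k j * v j) ^ 2) P := by
    intro v k
    have := hprod v v k
    simpa only [← sq] using this
  -- main part
  set A : Matrix (Fin d) (Fin d) ℝ := Matrix.of fun i j =>
    ∫ ω, ((outerMat (Y ω) - covMat P Y) * (outerMat (Y ω) - covMat P Y)) i j ∂P with hA_def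
  have hA : ∀ i j, A i j = ∫ ω, ∑ k, m ω i k * m ω k j ∂P := by
    intro i j
    simp only [hA_def, Matrix.of_apply]
    refine integral_congr_ae (Filter.Eventually.of_forall fun ω => ?_)
    simp [Matrix.mul_apply, Matrix.sub_apply, outerMat, hm_def]
  show ‖Matrix.toEuclideanCLM (𝕜 := ℝ) (n := Fin d) A‖ ≤ d * weakVarSq P Y
  apply ContinuousLinearMap.opNorm_le_of_unit_norm hC
  intro x hx
  set w : EuclideanSpace ℝ (Fin d) := Matrix.toEuclideanCLM (𝕜 := ℝ) (n := Fin d) A x with hw_def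
  by_cases hw0 : w = 0
  · rw [hw0]; simpa using hC
  set u : EuclideanSpace ℝ (Fin d) := ‖w‖⁻¹ • w with hu_def
  have hu : ‖u‖ = 1 := norm_smul_inv_norm hw0
  have hwi : ∀ i, w i = ∑ j, A i j * x j := fun i => rfl
  have hui : ∀ i, u i = ‖w‖⁻¹ * w i := fun i => rfl
  have hnormsq : ‖w‖ ^ 2 = ∑ i, w i ^ 2 := by
    rw [EuclideanSpace.norm_eq, Real.sq_sqrt (by positivity)]
    simp [Real.norm_eq_abs, sq_abs]
  have hwnorm : ‖w‖ = ∑ i, u i * w i := by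
    have h1 : ∑ i, u i * w i = ‖w‖⁻¹ * ∑ i, w i ^ 2 := by
      rw [Finset.mul_sum]; apply Finset.sum_congr rfl; intro i _; rw [hui i]; ring
    rw [h1, ← hnormsq, sq]
    field_simp
  have hintbilin : ∀ i j, Integrable (fun ω => u i * x j * ∑ k, m ω i k * m ω k j) P := by
    intro i j
    exact (integrable_finset_sum _ fun k _ => hm2 i k k j).const_mul _
  have hstep : ∑ i, u i * w i
      = ∫ ω, ∑ i, ∑ j, u i * x j * ∑ k, m ω i k * m ω k j ∂P := by
    rw [integral_finset_sum _ fun i _ => integrable_finset_sum _ fun j _ => hintbilin i j]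
    apply Finset.sum_congr rfl; intro i _
    rw [hwi i, Finset.mul_sum, integral_finset_sum _ fun j _ => hintbilin i j]
    apply Finset.sum_congr rfl; intro j _
    calc u i * (A i j * x j) = (u i * x j) * A i j := by ring
      _ = ∫ ω, u i * x j * ∑ k, m ω i k * m ω k j ∂P := by
          rw [hA i j, ← integral_const_mul]
  have hrearr : ∀ ω, ∑ i, ∑ j, u i * x j * ∑ k, m ω i k * m ω k j
      = ∑ k, (∑ i, m ω k i * u i) * (∑ j, m ω k j * x j) := by
    intro ω
    have hlhs : ∀ i j, u i * x j * ∑ k, m ω i k * m ω k j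
        = ∑ k, u i * x j * (m ω i k * m ω k j) := fun i j => Finset.mul_sum _ _ _
    have hrhs : ∀ k, (∑ i, m ω k i * u i) * (∑ j, m ω k j * x j)
        = ∑ i, ∑ j, (m ω k i * u i) * (m ω k j * x j) := fun k => Finset.sum_mul_sum _ _ _ _
    simp_rw [hlhs, hrhs]
    calc ∑ i, ∑ j, ∑ k, u i * x j * (m ω i k * m ω k j)
        = ∑ i, ∑ k, ∑ j, u i * x j * (m ω i k * m ω k j) :=
          Finset.sum_congr rfl fun i _ => Finset.sum_comm
      _ = ∑ k, ∑ i, ∑ j, u i * x j * (m ω i k * m ω k j) := Finset.sum_comm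
      _ = ∑ k, ∑ i, ∑ j, (m ω k i * u i) * (m ω k j * x j) := by
          refine Finset.sum_congr rfl fun k _ => Finset.sum_congr rfl fun i _ =>
            Finset.sum_congr rfl fun j _ => ?_
          rw [hsymm ω i k]; ring
  have hfinal : ∫ ω, ∑ k, (∑ i, m ω k i * u i) * (∑ j, m ω k j * x j) ∂P
      ≤ d * weakVarSq P Y := by
    have hmono : ∫ ω, ∑ k, (∑ i, m ω k i * u i) * (∑ j, m ω k j * x j) ∂P
        ≤ ∫ ω, ∑ k, ((∑ i, m ω k i * u i) ^ 2 + (∑ j, m ω k j * x j) ^ 2) / 2 ∂P := by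
      refine integral_mono (integrable_finset_sum _ fun k _ => hprod u x k)
        (integrable_finset_sum _ fun k _ => ((hsqint u k).add (hsqint x k)).div_const 2)
        fun ω => ?_
      apply Finset.sum_le_sum; intro k _
      nlinarith [sq_nonneg ((∑ i, m ω k i * u i) - (∑ j, m ω k j * x j))]
    refine hmono.trans ?_
    have hint5 : ∀ k : Fin d, Integrable
        (fun ω => ((∑ i, m ω k i * u i) ^ 2 + (∑ j, m ω k j * x j) ^ 2) / 2) P :=
      fun k => ((hsqint u k).add (hsqint x k)).div_const 2
    rw [integral_finset_sum _ fun k _ => hint5 k]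
    have hterm : ∀ k ∈ Finset.univ,
        ∫ ω, ((∑ i, m ω k i * u i) ^ 2 + (∑ j, m ω k j * x j) ^ 2) / 2 ∂P
          ≤ weakVarSq P Y := by
      intro k _
      rw [integral_div, integral_add (hsqint u k) (hsqint x k)]
      have h1 := hkey u hu k
      have h2 := hkey x hx k
      linarith
    calc ∑ k : Fin d, ∫ ω, ((∑ i, m ω k i * u i) ^ 2 + (∑ j, m ω k j * x j) ^ 2) / 2 ∂P
        ≤ ∑ _k : Fin d, weakVarSq P Y := Finset.sum_le_sum hterm
      _ = d * weakVarSq P Y := by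
          rw [Finset.sum_const, Finset.card_univ, Fintype.card_fin, nsmul_eq_mul]
  rw [hwnorm, hstep]
  calc ∫ ω, ∑ i, ∑ j, u i * x j * ∑ k, m ω i k * m ω k j ∂P
      = ∫ ω, ∑ k, (∑ i, m ω k i * u i) * (∑ j, m ω k j * x j) ∂P := by
        apply integral_congr_ae; filter_upwards with ω; rw [hrearr ω]
    _ ≤ d * weakVarSq P Y := hfinal
end

section
/- Let Y be a centered random vector in ℝ^d with 𝔼‖Y‖₂⁴ < ∞ and covariance Σ = 𝔼(Y⊗Y), and assume that ‖𝔼((Y⊗Y)²)‖ ≥ Tr(Σ)‖Σ‖. Then the weak variance satisfies R_Y ≥ √((r(Σ) − 1)/d) · ‖Σ‖, where r(Σ) = Tr(Σ)/‖Σ‖ is the effective rank. -/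
open MeasureTheory ProbabilityTheory
open scoped RealInnerProductSpace

section WeakVarAux

open scoped Matrix

set_option linter.unusedSectionVars false

variable {Ω : Type*} [MeasurableSpace Ω] {P : Measure Ω} [IsProbabilityMeasure P] {d : ℕ}
  {Y : Ω → EuclideanSpace ℝ (Fin d)}

lemma WeakVarAux.abs_coord_le (x : EuclideanSpace ℝ (Fin d)) (i : Fin d) : |x i| ≤ ‖x‖ := by
  rw [EuclideanSpace.norm_eq, ← Real.sqrt_sq (abs_nonneg (x i))]
  apply Real.sqrt_le_sqrt
  rw [sq_abs]
  calc x i ^ 2 ≤ ∑ j, x j ^ 2 :=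
        Finset.single_le_sum (f := fun j => x j ^ 2) (fun j _ => sq_nonneg _) (Finset.mem_univ i)
    _ = ∑ j, ‖x j‖ ^ 2 := by simp [Real.norm_eq_abs, sq_abs]

namespace WeakVarAux

lemma measY (hY : Measurable Y) (i : Fin d) : Measurable fun ω => Y ω i := by
  exact ((EuclideanSpace.proj (𝕜 := ℝ) i).continuous.measurable).comp hY

lemma int4 (hY : Measurable Y) (hY4 : Integrable (fun ω => ‖Y ω‖ ^ 4) P) (i j k l : Fin d) :
    Integrable (fun ω => Y ω i * Y ω j * (Y ω k * Y ω l)) P := by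
  refine hY4.mono' ?_ (Filter.Eventually.of_forall fun ω => ?_)
  · exact (((measY hY i).mul (measY hY j)).mul
      ((measY hY k).mul (measY hY l))).aestronglyMeasurable
  · have h1 := abs_coord_le (Y ω) i
    have h2 := abs_coord_le (Y ω) j
    have h3 := abs_coord_le (Y ω) k
    have h4 := abs_coord_le (Y ω) l
    calc ‖Y ω i * Y ω j * (Y ω k * Y ω l)‖
        = |Y ω i| * |Y ω j| * (|Y ω k| * |Y ω l|) := by
          rw [Real.norm_eq_abs, abs_mul, abs_mul, abs_mul]
      _ ≤ ‖Y ω‖ * ‖Y ω‖ * (‖Y ω‖ * ‖Y ω‖) :=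
          mul_le_mul (mul_le_mul h1 h2 (abs_nonneg _) (norm_nonneg _))
            (mul_le_mul h3 h4 (abs_nonneg _) (norm_nonneg _)) (by positivity) (by positivity)
      _ = ‖Y ω‖ ^ 4 := by ring

lemma intN2 (hY : Measurable Y) (hY4 : Integrable (fun ω => ‖Y ω‖ ^ 4) P) :
    Integrable (fun ω => ‖Y ω‖ ^ 2) P := by
  refine ((integrable_const (1:ℝ)).add hY4).mono' ?_ (Filter.Eventually.of_forall fun ω => ?_)
  · exact (hY.norm.pow_const 2).aestronglyMeasurable
  · simp only [Real.norm_eq_abs, abs_pow, abs_norm, Pi.add_apply]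
    nlinarith [norm_nonneg (Y ω), sq_nonneg (‖Y ω‖ ^ 2 - 1)]

lemma int2 (hY : Measurable Y) (hY4 : Integrable (fun ω => ‖Y ω‖ ^ 4) P) (i j : Fin d) :
    Integrable (fun ω => Y ω i * Y ω j) P := by
  refine (intN2 hY hY4).mono' ?_ (Filter.Eventually.of_forall fun ω => ?_)
  · exact ((measY hY i).mul (measY hY j)).aestronglyMeasurable
  · have h1 := abs_coord_le (Y ω) i
    have h2 := abs_coord_le (Y ω) j
    calc ‖Y ω i * Y ω j‖ = |Y ω i| * |Y ω j| := by rw [Real.norm_eq_abs, abs_mul]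
      _ ≤ ‖Y ω‖ * ‖Y ω‖ := mul_le_mul h1 h2 (abs_nonneg _) (norm_nonneg _)
      _ = ‖Y ω‖ ^ 2 := by ring

lemma cov_apply (i j : Fin d) : covMat P Y i j = ∫ ω, Y ω i * Y ω j ∂P := rfl

lemma cov_symm (i j : Fin d) : covMat P Y i j = covMat P Y j i := by
  rw [cov_apply, cov_apply,
    show (fun ω => Y ω i * Y ω j) = fun ω => Y ω j * Y ω i from funext fun ω => mul_comm _ _]

lemma intf (hY : Measurable Y) (hY4 : Integrable (fun ω => ‖Y ω‖ ^ 4) P) (k j l : Fin d) :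
    Integrable (fun ω => (Y ω k * Y ω j - covMat P Y k j) * (Y ω k * Y ω l - covMat P Y k l))
      P := by
  have hrw : (fun ω => (Y ω k * Y ω j - covMat P Y k j) * (Y ω k * Y ω l - covMat P Y k l))
      = fun ω => Y ω j * Y ω k * (Y ω k * Y ω l) - covMat P Y k l * (Y ω k * Y ω j)
          - (covMat P Y k j * (Y ω k * Y ω l) - covMat P Y k j * covMat P Y k l) := by
    funext ω; ring
  rw [hrw]
  exact ((int4 hY hY4 j k k l).sub ((int2 hY hY4 k j).const_mul _)).sub
    (((int2 hY hY4 k l).const_mul _).sub (integrable_const _))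

lemma int_f_mul_f (hY : Measurable Y) (hY4 : Integrable (fun ω => ‖Y ω‖ ^ 4) P) (k j l : Fin d) :
    ∫ ω, (Y ω k * Y ω j - covMat P Y k j) * (Y ω k * Y ω l - covMat P Y k l) ∂P
      = (∫ ω, Y ω j * Y ω k * (Y ω k * Y ω l) ∂P) - covMat P Y j k * covMat P Y k l := by
  have h4 := int4 hY hY4 j k k l
  have h2a := int2 hY hY4 k j
  have h2b := int2 hY hY4 k l
  have hrw : (fun ω => (Y ω k * Y ω j - covMat P Y k j) * (Y ω k * Y ω l - covMat P Y k l))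
      = fun ω => Y ω j * Y ω k * (Y ω k * Y ω l) - covMat P Y k l * (Y ω k * Y ω j)
          - (covMat P Y k j * (Y ω k * Y ω l) - covMat P Y k j * covMat P Y k l) := by
    funext ω; ring
  rw [hrw, integral_sub (f := fun ω => Y ω j * Y ω k * (Y ω k * Y ω l)
        - covMat P Y k l * (Y ω k * Y ω j))
      (g := fun ω => covMat P Y k j * (Y ω k * Y ω l) - covMat P Y k j * covMat P Y k l)
      (h4.sub (h2a.const_mul _)) ((h2b.const_mul _).sub (integrable_const _)),
    integral_sub (f := fun ω => Y ω j * Y ω k * (Y ω k * Y ω l))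
      (g := fun ω => covMat P Y k l * (Y ω k * Y ω j)) h4 (h2a.const_mul _),
    integral_sub (f := fun ω => covMat P Y k j * (Y ω k * Y ω l))
      (g := fun _ => covMat P Y k j * covMat P Y k l) (h2b.const_mul _) (integrable_const _),
    integral_const_mul, integral_const_mul, integral_const]
  rw [← cov_apply, ← cov_apply, cov_symm k j]
  simp [measure_univ]
  ring

lemma key_quadform (hY : Measurable Y) (hY4 : Integrable (fun ω => ‖Y ω‖ ^ 4) P)
    (x : Fin d → ℝ) :
    ∑ k, ∫ ω, (∑ j, (Y ω k * Y ω j - covMat P Y k j) * x j) ^ 2 ∂P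
      = x ⬝ᵥ (((Matrix.of fun i j => ∫ ω, (outerMat (Y ω) * outerMat (Y ω)) i j ∂P)
          - covMat P Y * covMat P Y) *ᵥ x) := by
  have hterm : ∀ k, ∫ ω, (∑ j, (Y ω k * Y ω j - covMat P Y k j) * x j) ^ 2 ∂P
      = ∑ j, ∑ l, (x j * x l) *
          ((∫ ω, Y ω j * Y ω k * (Y ω k * Y ω l) ∂P) - covMat P Y j k * covMat P Y k l) := by
    intro k
    have hrw : ∀ ω, (∑ j, (Y ω k * Y ω j - covMat P Y k j) * x j) ^ 2
        = ∑ j, ∑ l, (x j * x l) *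
            ((Y ω k * Y ω j - covMat P Y k j) * (Y ω k * Y ω l - covMat P Y k l)) := by
      intro ω
      rw [sq, Finset.sum_mul_sum]
      exact Finset.sum_congr rfl fun j _ => Finset.sum_congr rfl fun l _ => by ring
    simp_rw [hrw]
    rw [integral_finset_sum _ (fun j _ => integrable_finset_sum _
      (fun l _ => ((intf hY hY4 k j l).const_mul _)))]
    refine Finset.sum_congr rfl fun j _ => ?_
    rw [integral_finset_sum _ (fun l _ => ((intf hY hY4 k j l).const_mul _))]
    refine Finset.sum_congr rfl fun l _ => ?_
    rw [integral_const_mul, int_f_mul_f hY hY4 k j l]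
  have hM : ∀ j l, (Matrix.of fun i j => ∫ ω, (outerMat (Y ω) * outerMat (Y ω)) i j ∂P) j l
      = ∑ k, ∫ ω, Y ω j * Y ω k * (Y ω k * Y ω l) ∂P := by
    intro j l
    show ∫ ω, (outerMat (Y ω) * outerMat (Y ω)) j l ∂P = _
    have h : ∀ ω, (outerMat (Y ω) * outerMat (Y ω)) j l
        = ∑ k, Y ω j * Y ω k * (Y ω k * Y ω l) := by
      intro ω; rw [Matrix.mul_apply]; rfl
    simp_rw [h]
    exact integral_finset_sum _ (fun k _ => int4 hY hY4 j k k l)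
  simp_rw [hterm]
  simp only [dotProduct, Matrix.mulVec, Matrix.sub_apply]
  rw [Finset.sum_comm]
  refine Finset.sum_congr rfl fun j _ => ?_
  rw [Finset.sum_comm, Finset.mul_sum]
  refine Finset.sum_congr rfl fun l _ => ?_
  rw [hM j l, Matrix.mul_apply, ← Finset.sum_sub_distrib, Finset.sum_mul, Finset.mul_sum]
  exact Finset.sum_congr rfl fun k _ => by ring

lemma opnorm_le_of_eigs {d : ℕ} {B : Matrix (Fin d) (Fin d) ℝ} (hB : B.IsHermitian) {c : ℝ}
    (hc : 0 ≤ c) (h : ∀ i, |hB.eigenvalues i| ≤ c) : matOpNorm B ≤ c := by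
  rw [matOpNorm]
  refine ContinuousLinearMap.opNorm_le_bound _ hc (fun x => ?_)
  set T := Matrix.toEuclideanCLM (𝕜 := ℝ) (n := Fin d) B with hT
  set b := hB.eigenvectorBasis with hb
  have hsa : IsSelfAdjoint T := by
    rw [IsSelfAdjoint, ← map_star, Matrix.star_eq_conjTranspose, hB.eq]
  have hTb : ∀ i, T (b i) = hB.eigenvalues i • (b i) := by
    intro i
    ext j
    have h2 := congr_fun (hB.mulVec_eigenvectorBasis i) j
    simpa [hT, hb, Matrix.ofLp_toEuclideanCLM] using h2
  have hsym : ∀ y z : EuclideanSpace ℝ (Fin d), ⟪T y, z⟫ = ⟪y, T z⟫ :=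
    fun y z => hsa.isSymmetric y z
  have hrepr : ∀ i, b.repr (T x) i = hB.eigenvalues i * b.repr x i := by
    intro i
    rw [b.repr_apply_apply, b.repr_apply_apply, ← hsym (b i) x, hTb i, real_inner_smul_left]
  calc ‖T x‖ = ‖b.repr (T x)‖ := (b.repr.norm_map _).symm
    _ ≤ c * ‖b.repr x‖ := by
        rw [EuclideanSpace.norm_eq, EuclideanSpace.norm_eq, ← Real.sqrt_sq hc,
          ← Real.sqrt_mul (sq_nonneg c)]
        apply Real.sqrt_le_sqrt
        rw [Finset.mul_sum]
        refine Finset.sum_le_sum fun i _ => ?_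
        rw [hrepr i, Real.norm_eq_abs, Real.norm_eq_abs, abs_mul, mul_pow]
        exact mul_le_mul_of_nonneg_right (pow_le_pow_left₀ (abs_nonneg _) (h i) 2) (sq_nonneg _)
    _ = c * ‖x‖ := by rw [b.repr.norm_map]

lemma bddAboveG (hY : Measurable Y) (hY4 : Integrable (fun ω => ‖Y ω‖ ^ 4) P) :
    BddAbove (Set.range fun p : Metric.sphere (0 : EuclideanSpace ℝ (Fin d)) 1 ×
        Metric.sphere (0 : EuclideanSpace ℝ (Fin d)) 1 =>
      ∫ ω, (∑ i, ∑ j,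
        (p.2 : EuclideanSpace ℝ (Fin d)) i * (Y ω i * Y ω j - covMat P Y i j) *
        (p.1 : EuclideanSpace ℝ (Fin d)) j) ^ 2 ∂P) := by
  classical
  set cS : ℝ := ∑ i, ∑ j, |covMat P Y i j| with hcS
  have hcS0 : 0 ≤ cS := Finset.sum_nonneg fun i _ =>
    Finset.sum_nonneg fun j _ => abs_nonneg _
  have hint : Integrable (fun ω => ((d:ℝ)^2 * ‖Y ω‖^2 + cS)^2) P := by
    have hrw : (fun ω => ((d:ℝ)^2 * ‖Y ω‖^2 + cS)^2)
        = fun ω => (d:ℝ)^4 * ‖Y ω‖^4 + (2*(d:ℝ)^2*cS) * ‖Y ω‖^2 + cS^2 := by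
      funext ω; ring
    rw [hrw]
    exact ((hY4.const_mul _).add ((intN2 hY hY4).const_mul _)).add (integrable_const _)
  refine ⟨∫ ω, ((d:ℝ)^2 * ‖Y ω‖^2 + cS)^2 ∂P, fun r hr => ?_⟩
  obtain ⟨p, rfl⟩ := hr
  refine integral_mono_of_nonneg (Filter.Eventually.of_forall fun ω => sq_nonneg _) hint
    (Filter.Eventually.of_forall fun ω => ?_)
  set v := (p.2 : EuclideanSpace ℝ (Fin d))
  set u := (p.1 : EuclideanSpace ℝ (Fin d))
  have hv : ∀ i, |v i| ≤ 1 := by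
    intro i
    have := abs_coord_le v i
    rwa [mem_sphere_zero_iff_norm.mp p.2.coe_prop] at this
  have hu : ∀ i, |u i| ≤ 1 := by
    intro i
    have := abs_coord_le u i
    rwa [mem_sphere_zero_iff_norm.mp p.1.coe_prop] at this
  have habs : |∑ i, ∑ j, v i * (Y ω i * Y ω j - covMat P Y i j) * u j|
      ≤ (d:ℝ)^2 * ‖Y ω‖^2 + cS := by
    calc |∑ i, ∑ j, v i * (Y ω i * Y ω j - covMat P Y i j) * u j|
        ≤ ∑ i, |∑ j, v i * (Y ω i * Y ω j - covMat P Y i j) * u j| :=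
          Finset.abs_sum_le_sum_abs _ _
      _ ≤ ∑ i, ∑ j, |v i * (Y ω i * Y ω j - covMat P Y i j) * u j| :=
          Finset.sum_le_sum fun i _ => Finset.abs_sum_le_sum_abs _ _
      _ ≤ ∑ i, ∑ j, (‖Y ω‖^2 + |covMat P Y i j|) := by
          refine Finset.sum_le_sum fun i _ => Finset.sum_le_sum fun j _ => ?_
          have h1 : |v i * (Y ω i * Y ω j - covMat P Y i j) * u j|
              = |v i| * |Y ω i * Y ω j - covMat P Y i j| * |u j| := by
            rw [abs_mul, abs_mul]
          rw [h1]
          have h2 : |Y ω i * Y ω j - covMat P Y i j| ≤ ‖Y ω‖^2 + |covMat P Y i j| := by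
            refine (abs_sub _ _).trans ?_
            gcongr
            calc |Y ω i * Y ω j| = |Y ω i| * |Y ω j| := abs_mul _ _
              _ ≤ ‖Y ω‖ * ‖Y ω‖ := mul_le_mul (abs_coord_le _ _) (abs_coord_le _ _)
                  (abs_nonneg _) (norm_nonneg _)
              _ = ‖Y ω‖^2 := (sq ‖Y ω‖).symm
          calc |v i| * |Y ω i * Y ω j - covMat P Y i j| * |u j|
              ≤ 1 * (‖Y ω‖^2 + |covMat P Y i j|) * 1 := by
                refine mul_le_mul (mul_le_mul (hv i) h2 (abs_nonneg _) zero_le_one)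
                  (hu j) (abs_nonneg _) ?_
                positivity
            _ = ‖Y ω‖^2 + |covMat P Y i j| := by ring
      _ = (d:ℝ)^2 * ‖Y ω‖^2 + cS := by
          rw [hcS]
          simp [Finset.sum_add_distrib, Finset.sum_const, Finset.card_univ]
          ring
  calc (∑ i, ∑ j, v i * (Y ω i * Y ω j - covMat P Y i j) * u j)^2
      = |∑ i, ∑ j, v i * (Y ω i * Y ω j - covMat P Y i j) * u j|^2 := (sq_abs _).symm
    _ ≤ ((d:ℝ)^2 * ‖Y ω‖^2 + cS)^2 :=
        pow_le_pow_left₀ (abs_nonneg _) habs 2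

lemma term_le_weakVarSq (hY : Measurable Y) (hY4 : Integrable (fun ω => ‖Y ω‖ ^ 4) P)
    {x : EuclideanSpace ℝ (Fin d)} (hx : ‖x‖ = 1) (k : Fin d) :
    ∫ ω, (∑ j, (Y ω k * Y ω j - covMat P Y k j) * x j) ^ 2 ∂P ≤ weakVarSq P Y := by
  have hek : (EuclideanSpace.single k (1:ℝ)) ∈ Metric.sphere (0 : EuclideanSpace ℝ (Fin d)) 1 := by
    rw [mem_sphere_zero_iff_norm, EuclideanSpace.norm_single]
    norm_num
  have hxs : x ∈ Metric.sphere (0 : EuclideanSpace ℝ (Fin d)) 1 :=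
    mem_sphere_zero_iff_norm.mpr hx
  have heval : ∫ ω, (∑ i, ∑ j,
        (EuclideanSpace.single k (1:ℝ)) i * (Y ω i * Y ω j - covMat P Y i j) * x j) ^ 2 ∂P
      = ∫ ω, (∑ j, (Y ω k * Y ω j - covMat P Y k j) * x j) ^ 2 ∂P := by
    congr 1
    funext ω
    congr 1
    rw [Finset.sum_eq_single k]
    · refine Finset.sum_congr rfl fun j _ => ?_
      simp [EuclideanSpace.single_apply]
    · intro i _ hik
      refine Finset.sum_eq_zero fun j _ => ?_
      simp [EuclideanSpace.single_apply, hik]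
    · simp
  rw [← heval]
  exact le_ciSup (bddAboveG hY hY4) (⟨x, hxs⟩, ⟨EuclideanSpace.single k (1:ℝ), hek⟩)

end WeakVarAux

end WeakVarAux

/-- If a centered `Y` with `𝔼‖Y‖₂⁴ < ∞` and covariance `Σ` satisfies
`‖𝔼((Y⊗Y)²)‖ ≥ Tr(Σ)‖Σ‖`, then `R_Y ≥ √((r(Σ) - 1)/d) ‖Σ‖`. -/
theorem weakVar_lower_bound
    {Ω : Type*} [MeasurableSpace Ω] (P : Measure Ω) [IsProbabilityMeasure P]
    {d : ℕ} (Y : Ω → EuclideanSpace ℝ (Fin d)) (hY : Measurable Y)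
    (hY4 : Integrable (fun ω => ‖Y ω‖ ^ 4) P) (hcent : IsCentered P Y)
    (hFKG : (covMat P Y).trace * matOpNorm (covMat P Y) ≤
      matOpNorm (Matrix.of fun i j => ∫ ω, (outerMat (Y ω) * outerMat (Y ω)) i j ∂P)) :
    Real.sqrt ((effRank (covMat P Y) - 1) / d) * matOpNorm (covMat P Y) ≤ weakVar P Y := by
  classical
  have hWnn0 : 0 ≤ weakVar P Y := Real.sqrt_nonneg _
  rcases le_or_gt ((effRank (covMat P Y) - 1) / d) 0 with hc | hc
  · rw [Real.sqrt_eq_zero_of_nonpos hc, zero_mul]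
    exact hWnn0
  · have hd0 : (d:ℝ) ≠ 0 := by
      intro h0
      rw [h0, div_zero] at hc
      exact lt_irrefl _ hc
    have hdpos : (0:ℝ) < d := lt_of_le_of_ne (Nat.cast_nonneg d) (Ne.symm hd0)
    have hdn : 0 < d := by exact_mod_cast hdpos
    haveI : Nonempty (Fin d) := ⟨⟨0, hdn⟩⟩
    have hSnn : (0:ℝ) ≤ matOpNorm (covMat P Y) := norm_nonneg _
    have hSne : matOpNorm (covMat P Y) ≠ 0 := by
      intro h0
      rw [effRank, h0, div_zero] at hc
      have : ((0:ℝ) - 1) / d < 0 := div_neg_of_neg_of_pos (by norm_num) hdpos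
      linarith
    have hBH : ((Matrix.of fun i j => ∫ ω, (outerMat (Y ω) * outerMat (Y ω)) i j ∂P)
        - covMat P Y * covMat P Y).IsHermitian := by
      show Matrix.conjTranspose _ = _
      ext i j
      simp only [Matrix.conjTranspose_apply, star_trivial, Matrix.sub_apply, Matrix.of_apply]
      have hMsymm : (∫ ω, (outerMat (Y ω) * outerMat (Y ω)) j i ∂P)
          = ∫ ω, (outerMat (Y ω) * outerMat (Y ω)) i j ∂P := by
        congr 1
        funext ω
        rw [Matrix.mul_apply, Matrix.mul_apply]
        exact Finset.sum_congr rfl fun k _ => by simp [outerMat]; ring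
      rw [hMsymm]
      congr 1
      rw [Matrix.mul_apply, Matrix.mul_apply]
      refine Finset.sum_congr rfl fun k _ => ?_
      rw [WeakVarAux.cov_symm (P := P) (Y := Y) j k, WeakVarAux.cov_symm (P := P) (Y := Y) k i]
      ring
    have heig : ∀ i, hBH.eigenvalues i
        = ∑ k, ∫ ω, (∑ j, (Y ω k * Y ω j - covMat P Y k j) *
            (hBH.eigenvectorBasis i) j) ^ 2 ∂P := by
      intro i
      have h1 := hBH.eigenvalues_eq i
      have h2 := WeakVarAux.key_quadform hY hY4 (hBH.eigenvectorBasis i)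
      exact h1.trans (by exact h2.symm)
    have heig_nonneg : ∀ i, 0 ≤ hBH.eigenvalues i := by
      intro i
      rw [heig i]
      exact Finset.sum_nonneg fun k _ => integral_nonneg fun ω => sq_nonneg _
    have heig_le : ∀ i, hBH.eigenvalues i ≤ (d:ℝ) * weakVarSq P Y := by
      intro i
      rw [heig i]
      have hnorm1 : ‖hBH.eigenvectorBasis i‖ = 1 := hBH.eigenvectorBasis.orthonormal.1 i
      calc ∑ k, ∫ ω, (∑ j, (Y ω k * Y ω j - covMat P Y k j) *
              (hBH.eigenvectorBasis i) j) ^ 2 ∂P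
          ≤ ∑ _k : Fin d, weakVarSq P Y :=
            Finset.sum_le_sum fun k _ => WeakVarAux.term_le_weakVarSq hY hY4 hnorm1 k
        _ = (d:ℝ) * weakVarSq P Y := by
            rw [Finset.sum_const, Finset.card_univ, Fintype.card_fin, nsmul_eq_mul]
    have hdW : 0 ≤ (d:ℝ) * weakVarSq P Y := le_trans (heig_nonneg (Classical.arbitrary _))
      (heig_le (Classical.arbitrary _))
    have hBnorm : matOpNorm ((Matrix.of fun i j =>
          ∫ ω, (outerMat (Y ω) * outerMat (Y ω)) i j ∂P) - covMat P Y * covMat P Y)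
        ≤ (d:ℝ) * weakVarSq P Y :=
      WeakVarAux.opnorm_le_of_eigs hBH hdW fun i =>
        abs_le.mpr ⟨le_trans (by linarith [hdW]) (heig_nonneg i), heig_le i⟩
    have htri : matOpNorm (Matrix.of fun i j =>
          ∫ ω, (outerMat (Y ω) * outerMat (Y ω)) i j ∂P)
        ≤ matOpNorm ((Matrix.of fun i j =>
            ∫ ω, (outerMat (Y ω) * outerMat (Y ω)) i j ∂P) - covMat P Y * covMat P Y)
          + matOpNorm (covMat P Y * covMat P Y) := by
      calc matOpNorm (Matrix.of fun i j => ∫ ω, (outerMat (Y ω) * outerMat (Y ω)) i j ∂P)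
          = ‖Matrix.toEuclideanCLM (𝕜 := ℝ) (n := Fin d) ((Matrix.of fun i j =>
                ∫ ω, (outerMat (Y ω) * outerMat (Y ω)) i j ∂P) - covMat P Y * covMat P Y)
              + Matrix.toEuclideanCLM (𝕜 := ℝ) (n := Fin d) (covMat P Y * covMat P Y)‖ := by
            rw [matOpNorm, ← map_add, sub_add_cancel]
        _ ≤ _ := norm_add_le _ _
    have hmul : matOpNorm (covMat P Y * covMat P Y)
        ≤ matOpNorm (covMat P Y) * matOpNorm (covMat P Y) := by
      calc matOpNorm (covMat P Y * covMat P Y)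
          = ‖Matrix.toEuclideanCLM (𝕜 := ℝ) (n := Fin d) (covMat P Y)
              * Matrix.toEuclideanCLM (𝕜 := ℝ) (n := Fin d) (covMat P Y)‖ := by
            rw [matOpNorm, map_mul]
        _ ≤ _ := norm_mul_le _ _
    set nS := matOpNorm (covMat P Y) with hnS
    set W := weakVarSq P Y with hWdef
    set tr := (covMat P Y).trace with htr
    have hchain : tr * nS - nS ^ 2 ≤ (d:ℝ) * W := by
      have h2 : nS ^ 2 = nS * nS := sq nS
      linarith [hFKG, htri, hmul, hBnorm]
    have hWkey : ((effRank (covMat P Y) - 1) / d) * nS ^ 2 ≤ W := by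
      rw [effRank, ← hnS, ← htr]
      have hrw : ((tr / nS - 1) / d) * nS ^ 2 = (tr * nS - nS ^ 2) / d := by
        field_simp
      rw [hrw, div_le_iff₀ hdpos]
      nlinarith [hchain]
    have hsq : Real.sqrt ((effRank (covMat P Y) - 1) / d) * nS
        = Real.sqrt (((effRank (covMat P Y) - 1) / d) * nS ^ 2) := by
      rw [Real.sqrt_mul hc.le, Real.sqrt_sq hSnn]
    rw [hsq, weakVar, ← hWdef]
    exact Real.sqrt_le_sqrt hWkey
end
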